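/- arXiv:1904.10052 — 13 statements merged into one kernel-verified Lean document; each statement's English description precedes it below -/
import Mathlib

section
/- Let n ≥ 1 and let y = (y_1,…,y_{n-1},q) ∈ ℂ^n with |y_{n-j}| < C(n,j) for some 1 ≤ j ≤ n-1, where C(n,j) is the binomial coefficient. Then the supremum over z in the closed unit disk of |(C(n,j)·q·z − y_j)/(y_{n-j}·z − C(n,j))| equals (C(n,j)·|y_j − conj(y_{n-j})·q| + |y_j·y_{n-j} − C(n,j)²·q|)/(C(n,j)² − |y_{n-j}|²). -/
open Complex Metric
lemma normSq_ineq (c d z : ℂ) (hz : ‖z‖ ≤ 1)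
    (h : ‖c‖ ≤ ‖d‖) :
    ‖(starRingEnd ℂ) d * z + (starRingEnd ℂ) c‖ ≤ ‖c * z + d‖ := by
  have hz2 : Complex.normSq z ≤ 1 := by
    rw [← Complex.sq_norm]; nlinarith [norm_nonneg z]
  have hcd : Complex.normSq c ≤ Complex.normSq d := by
    rw [← Complex.sq_norm, ← Complex.sq_norm]
    exact pow_le_pow_left₀ (norm_nonneg c) h 2
  have hprod : 0 ≤ (Complex.normSq d - Complex.normSq c) * (1 - Complex.normSq z) :=
    mul_nonneg (by linarith) (by linarith)
  rw [Complex.norm_def, Complex.norm_def]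
  apply Real.sqrt_le_sqrt
  simp only [Complex.normSq_apply, Complex.add_re, Complex.add_im, Complex.mul_re,
    Complex.mul_im, Complex.conj_re, Complex.conj_im] at hprod ⊢
  nlinarith [hprod]

lemma mobius_sSup (a b c d : ℂ) (h : ‖c‖ < ‖d‖) :
    sSup ((fun z : ℂ => ‖(a * z + b) / (c * z + d)‖) '' closedBall 0 1)
      = (‖b * (starRingEnd ℂ) d - a * (starRingEnd ℂ) c‖
          + ‖a * d - b * c‖) /
        ((‖d‖) ^ 2 - (‖c‖) ^ 2) := by
  set D : ℝ := (‖d‖) ^ 2 - (‖c‖) ^ 2 with hDdef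
  have hD : 0 < D := by
    have := norm_nonneg c
    nlinarith
  have hDc : (D : ℂ) = d * (starRingEnd ℂ) d - c * (starRingEnd ℂ) c := by
    rw [Complex.mul_conj, Complex.mul_conj]
    norm_cast
    rw [hDdef, Complex.sq_norm, Complex.sq_norm]
  have hDc0 : (D : ℂ) ≠ 0 := Complex.ofReal_ne_zero.mpr hD.ne'
  have hd0 : d ≠ 0 := by
    intro hd
    rw [hd] at h
    simp at h
    exact absurd h (norm_nonneg c).not_gt
  set w0c : ℂ := b * (starRingEnd ℂ) d - a * (starRingEnd ℂ) c with hw0c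
  set k : ℂ := a * d - b * c with hk
  -- denominator nonzero on closed ball
  have hden : ∀ z : ℂ, ‖z‖ ≤ 1 → c * z + d ≠ 0 := by
    intro z hz hzero
    have : ‖c * z‖ < ‖d‖ := by
      rw [norm_mul]
      calc ‖c‖ * ‖z‖ ≤ ‖c‖ * 1 :=
            mul_le_mul_of_nonneg_left hz (norm_nonneg c)
        _ = ‖c‖ := mul_one _
        _ < ‖d‖ := h
    have hd' : d = -(c*z) := by linear_combination hzero
    rw [hd'] at this
    simp at this
  -- key identity
  have hkey : ∀ z : ℂ, c * z + d ≠ 0 →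
      (a * z + b) / (c * z + d)
        = w0c / (D:ℂ) + k * ((starRingEnd ℂ) d * z + (starRingEnd ℂ) c) / ((D:ℂ) * (c * z + d)) := by
    intro z hz
    have hnum : k * ((starRingEnd ℂ) d * z + (starRingEnd ℂ) c)
        = (a * z + b) * (D:ℂ) - w0c * (c * z + d) := by
      rw [hk, hw0c, hDc]; ring
    rw [hnum]
    rw [div_add_div _ _ hDc0 (mul_ne_zero hDc0 hz),
      div_eq_div_iff hz (mul_ne_zero hDc0 (mul_ne_zero hDc0 hz))]
    ring
  -- upper bound
  have hub : ∀ z : ℂ, ‖z‖ ≤ 1 →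
      ‖(a * z + b) / (c * z + d)‖
        ≤ (‖w0c‖ + ‖k‖) / D := by
    intro z hz
    have hz0 := hden z hz
    rw [hkey z hz0]
    have h1 : ‖k * ((starRingEnd ℂ) d * z + (starRingEnd ℂ) c) / ((D:ℂ) * (c * z + d))‖
        ≤ ‖k‖ / D := by
      have hpos : 0 < ‖c * z + d‖ := norm_pos_iff.mpr hz0
      rw [norm_div, norm_mul, norm_mul, Complex.norm_real, Real.norm_eq_abs, abs_of_pos hD]
      rw [div_le_div_iff₀ (by positivity) hD]
      have h2 := normSq_ineq c d z hz h.le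
      have h3 : 0 ≤ ‖k‖ := norm_nonneg k
      nlinarith [mul_le_mul_of_nonneg_left h2 (mul_nonneg h3 hD.le)]
    calc ‖w0c / (D:ℂ) + k * ((starRingEnd ℂ) d * z + (starRingEnd ℂ) c) / ((D:ℂ) * (c * z + d))‖
        ≤ ‖w0c / (D:ℂ)‖ + ‖k * ((starRingEnd ℂ) d * z + (starRingEnd ℂ) c) / ((D:ℂ) * (c * z + d))‖ := norm_add_le _ _
      _ ≤ ‖w0c‖ / D + ‖k‖ / D := by
          rw [norm_div, Complex.norm_real, Real.norm_eq_abs, abs_of_pos hD]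
          exact add_le_add le_rfl h1
      _ = (‖w0c‖ + ‖k‖) / D := by ring
  -- attainment
  have hmem : ∃ z : ℂ, ‖z‖ ≤ 1 ∧
      ‖(a * z + b) / (c * z + d)‖ = (‖w0c‖ + ‖k‖) / D := by
    by_cases hk0 : k = 0
    · refine ⟨0, by simp, ?_⟩
      have h0 : c * 0 + d ≠ 0 := hden 0 (by simp)
      rw [hkey 0 h0]
      simp only [hk0, zero_mul, zero_div, add_zero, norm_zero, map_zero, norm_div, Complex.norm_real, Real.norm_eq_abs,
        abs_of_pos hD]
    · set u : ℂ := if w0c = 0 then 1 else w0c / (‖w0c‖ : ℂ) with hu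
      have hu1 : ‖u‖ = 1 := by
        rw [hu]; split_ifs with h'
        · simp
        · rw [norm_div, Complex.norm_real, Real.norm_eq_abs, abs_of_pos (norm_pos_iff.mpr h'),
            div_self (norm_pos_iff.mpr h').ne']
      set v : ℂ := (‖k‖ : ℂ) * u / k with hv
      have hv1 : ‖v‖ = 1 := by
        rw [hv, norm_div, norm_mul, Complex.norm_real, Real.norm_eq_abs, _root_.abs_of_nonneg (norm_nonneg k),
          hu1, mul_one, div_self (norm_pos_iff.mpr hk0).ne']
      have hkv : k * v = (‖k‖ : ℂ) * u := by
        rw [hv]; field_simp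
      have hvv : v * (starRingEnd ℂ) v = 1 := by
        rw [Complex.mul_conj]
        norm_cast
        rw [← Complex.sq_norm, hv1]; norm_num
      set den : ℂ := (starRingEnd ℂ) d - v * c with hdden
      have hden0 : den ≠ 0 := by
        intro h0
        have he : (starRingEnd ℂ) d = v * c := by rw [hdden] at h0; linear_combination h0
        have := congrArg (‖·‖) he
        rw [Complex.norm_conj, norm_mul, hv1, one_mul] at this
        exact absurd this h.ne'
      set z₀ : ℂ := (v * d - (starRingEnd ℂ) c) / den with hz₀def
      have hnum_eq : v * d - (starRingEnd ℂ) c = v * (starRingEnd ℂ) den := by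
        rw [hdden, map_sub, Complex.conj_conj, map_mul]
        linear_combination (starRingEnd ℂ) c * hvv
      have habs : ‖z₀‖ = 1 := by
        rw [hz₀def, hnum_eq, norm_div, norm_mul, Complex.norm_conj, hv1, one_mul,
          div_self (norm_pos_iff.mpr hden0).ne']
      refine ⟨z₀, habs.le, ?_⟩
      have hcz : c * z₀ + d ≠ 0 := hden z₀ habs.le
      have hzden : z₀ * den = v * d - (starRingEnd ℂ) c := by
        rw [hz₀def]; field_simp
      have e1 : (c * z₀ + d) * den = (D:ℂ) := by
        calc (c * z₀ + d) * den = c * (z₀ * den) + d * den := by ring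
          _ = c * (v * d - (starRingEnd ℂ) c) + d * den := by rw [hzden]
          _ = (D:ℂ) := by rw [hDc, hdden]; ring
      have e2 : (a * z₀ + b) * den = w0c + k * v := by
        calc (a * z₀ + b) * den = a * (z₀ * den) + b * den := by ring
          _ = a * (v * d - (starRingEnd ℂ) c) + b * den := by rw [hzden]
          _ = w0c + k * v := by rw [hw0c, hk, hdden]; ring
      have hval : (a * z₀ + b) / (c * z₀ + d) = (w0c + (‖k‖ : ℂ) * u) / (D:ℂ) := by
        rw [div_eq_div_iff hcz hDc0]
        calc (a * z₀ + b) * (D:ℂ) = (a * z₀ + b) * ((c * z₀ + d) * den) := by rw [e1]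
          _ = ((a * z₀ + b) * den) * (c * z₀ + d) := by ring
          _ = (w0c + k * v) * (c * z₀ + d) := by rw [e2]
          _ = (w0c + (‖k‖ : ℂ) * u) * (c * z₀ + d) := by rw [hkv]
      rw [hval, norm_div, Complex.norm_real, Real.norm_eq_abs, abs_of_pos hD]
      congr 1
      by_cases hw : w0c = 0
      · simp only [hw, norm_zero, zero_add, norm_mul, Complex.norm_real, Real.norm_eq_abs,
          _root_.abs_of_nonneg (norm_nonneg k), hu1, mul_one]
      · have heq : w0c + (‖k‖ : ℂ) * u
            = w0c * (((‖w0c‖ + ‖k‖) / ‖w0c‖ : ℝ) : ℂ) := by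
          rw [hu, if_neg hw]
          have hw0 : (‖w0c‖ : ℂ) ≠ 0 :=
            Complex.ofReal_ne_zero.mpr (norm_pos_iff.mpr hw).ne'
          push_cast
          field_simp
        have hwpos : 0 < ‖w0c‖ := norm_pos_iff.mpr hw
        rw [heq, norm_mul, Complex.norm_real, Real.norm_eq_abs,
          _root_.abs_of_pos (div_pos (by linarith [norm_nonneg k]) hwpos)]
        rw [mul_div_assoc']
        exact mul_div_cancel_left₀ _ hwpos.ne' 
  -- conclude
  obtain ⟨z₀, hz₀, hval⟩ := hmem
  apply IsGreatest.csSup_eq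
  constructor
  · exact ⟨z₀, by simpa [Metric.mem_closedBall, Complex.dist_eq] using hz₀, hval⟩
  · rintro x ⟨z, hzmem, rfl⟩
    have : ‖z‖ ≤ 1 := by
      simpa [Metric.mem_closedBall, Complex.dist_eq] using hzmem
    exact hub z this

theorem stmt0 (n j : ℕ) (hn : 1 ≤ n) (hj1 : 1 ≤ j) (hjn : j ≤ n - 1)
    (yj ynj q : ℂ) (hb : ‖ynj‖ < (n.choose j : ℝ)) :
    sSup ((fun z : ℂ =>
        ‖((n.choose j : ℂ) * q * z - yj) / (ynj * z - (n.choose j : ℂ))‖) ''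
      closedBall (0 : ℂ) 1)
    = ((n.choose j : ℝ) * ‖yj - (starRingEnd ℂ) ynj * q‖ +
        ‖yj * ynj - (n.choose j : ℂ) ^ 2 * q‖) /
      ((n.choose j : ℝ) ^ 2 - (‖ynj‖) ^ 2) := by
  have h3 : ‖-(n.choose j : ℂ)‖ = (n.choose j : ℝ) := by
    rw [norm_neg, Complex.norm_natCast]
  have hb' : ‖ynj‖ < ‖-(n.choose j : ℂ)‖ := lt_of_lt_of_eq hb h3.symm
  have key := mobius_sSup ((n.choose j : ℂ) * q) (-yj) ynj (-(n.choose j : ℂ)) hb'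
  have hfun : (fun z : ℂ =>
        ‖((n.choose j : ℂ) * q * z - yj) / (ynj * z - (n.choose j : ℂ))‖)
      = fun z : ℂ =>
        ‖((n.choose j : ℂ) * q * z + -yj) / (ynj * z + -(n.choose j : ℂ))‖ := by
    funext z
    rw [sub_eq_add_neg, sub_eq_add_neg]
  have h1 : (-yj) * (starRingEnd ℂ) (-(n.choose j : ℂ))
        - ((n.choose j : ℂ) * q) * (starRingEnd ℂ) ynj
      = (n.choose j : ℂ) * (yj - (starRingEnd ℂ) ynj * q) := by
    rw [map_neg, Complex.conj_natCast]; ring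
  have h2 : ((n.choose j : ℂ) * q) * (-(n.choose j : ℂ)) - (-yj) * ynj
      = yj * ynj - (n.choose j : ℂ) ^ 2 * q := by ring
  rw [hfun, key, h1, h2, h3, norm_mul, Complex.norm_natCast]
end

section
/- For y = (y_1,…,y_{n-1},q) ∈ ℂ^n and 1 ≤ j ≤ n-1, with C = C(n,j) the binomial coefficient, the condition C·|y_j − conj(y_{n-j})·q| + |y_j·y_{n-j} − C²·q| < C² − |y_{n-j}|² implies |y_{n-j} − conj(y_j)·q| + |y_j − conj(y_{n-j})·q| < C·(1 − |q|²) and |q| < 1. -/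
open Complex

set_option maxHeartbeats 1000000

lemma core (a b q : ℂ)
    (h : ‖a - (starRingEnd ℂ) b * q‖ + ‖a * b - q‖ <
      1 - (‖b‖) ^ 2) :
    ‖b - (starRingEnd ℂ) a * q‖ + ‖a - (starRingEnd ℂ) b * q‖ <
      1 - (‖q‖) ^ 2 ∧ ‖q‖ < 1 := by
  set u := a - (starRingEnd ℂ) b * q with hu
  set w := a * b - q with hw
  set v := b - (starRingEnd ℂ) a * q with hv
  have hb1 : ‖b‖ < 1 := by
    nlinarith [norm_nonneg u, norm_nonneg w, norm_nonneg b]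
  have hbpos : (0:ℝ) < 1 - (‖b‖) ^ 2 := by nlinarith [norm_nonneg b]
  have key : ∀ ζ : ℂ, ‖ζ‖ = 1 → ‖a * ζ - q‖ < ‖ζ - b‖ := by
    intro ζ hζ
    have hζb : 0 < ‖ζ - b‖ := by
      have h1 : ‖ζ‖ ≤ ‖ζ - b‖ + ‖b‖ := by
        simpa using norm_add_le (ζ - b) b
      rw [hζ] at h1
      linarith
    have hid : (a * ζ - q) * (1 - (starRingEnd ℂ) b * b) =
        w * (1 - (starRingEnd ℂ) b * ζ) + (ζ - b) * u := by
      rw [hw, hu]; ring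
    have h1 : ‖1 - (starRingEnd ℂ) b * b‖ = 1 - (‖b‖) ^ 2 := by
      have e : (1 : ℂ) - (starRingEnd ℂ) b * b = ((1 - (‖b‖) ^ 2 : ℝ) : ℂ) := by
        rw [mul_comm, Complex.mul_conj, ← Complex.sq_norm]
        push_cast
        ring
      rw [e, Complex.norm_real, Real.norm_eq_abs, abs_of_pos hbpos]
    have h2 : ‖1 - (starRingEnd ℂ) b * ζ‖ = ‖ζ - b‖ := by
      have hζ1 : ζ * (starRingEnd ℂ) ζ = 1 := by
        rw [Complex.mul_conj]
        norm_cast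
        rw [← Complex.sq_norm, hζ]; norm_num
      calc ‖1 - (starRingEnd ℂ) b * ζ‖
          = ‖(starRingEnd ℂ) (1 - (starRingEnd ℂ) b * ζ)‖ :=
            (Complex.norm_conj _).symm
        _ = ‖1 - b * (starRingEnd ℂ) ζ‖ := by
            rw [map_sub, map_one, map_mul, Complex.conj_conj]
        _ = ‖(ζ - b) * (starRingEnd ℂ) ζ‖ := by
            congr 1
            rw [sub_mul, hζ1]
        _ = ‖ζ - b‖ := by
            rw [norm_mul, Complex.norm_conj, hζ, mul_one]
    have hstep : ‖a * ζ - q‖ * (1 - (‖b‖) ^ 2) <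
        ‖ζ - b‖ * (1 - (‖b‖) ^ 2) := by
      calc ‖a * ζ - q‖ * (1 - (‖b‖) ^ 2)
          = ‖(a * ζ - q) * (1 - (starRingEnd ℂ) b * b)‖ := by
            rw [norm_mul, h1]
        _ = ‖w * (1 - (starRingEnd ℂ) b * ζ) + (ζ - b) * u‖ := by rw [hid]
        _ ≤ ‖w‖ * ‖ζ - b‖ + ‖ζ - b‖ * ‖u‖ := by
            calc ‖w * (1 - (starRingEnd ℂ) b * ζ) + (ζ - b) * u‖
                ≤ ‖w * (1 - (starRingEnd ℂ) b * ζ)‖ +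
                  ‖(ζ - b) * u‖ := norm_add_le _ _
              _ = ‖w‖ * ‖ζ - b‖ +
                  ‖ζ - b‖ * ‖u‖ := by rw [norm_mul, norm_mul, h2]
        _ = (‖w‖ + ‖u‖) * ‖ζ - b‖ := by ring
        _ < (1 - (‖b‖) ^ 2) * ‖ζ - b‖ := by
            apply mul_lt_mul_of_pos_right _ hζb
            linarith
        _ = ‖ζ - b‖ * (1 - (‖b‖) ^ 2) := by ring
    exact lt_of_mul_lt_mul_right hstep hbpos.le
  have hsq : ∀ ζ : ℂ, ‖ζ‖ = 1 →
      Complex.normSq a + Complex.normSq q - 1 - Complex.normSq b <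
        2 * (ζ * ((starRingEnd ℂ) q * a - (starRingEnd ℂ) b)).re := by
    intro ζ hζ
    have hk := key ζ hζ
    have hk2 : (‖a * ζ - q‖) ^ 2 < (‖ζ - b‖) ^ 2 := by
      have h0 := norm_nonneg (a * ζ - q)
      nlinarith [hk, norm_nonneg (ζ - b)]
    rw [Complex.sq_norm, Complex.sq_norm] at hk2
    have hnζ : Complex.normSq ζ = 1 := by
      rw [← Complex.sq_norm, hζ]; norm_num
    simp only [Complex.normSq_apply, Complex.mul_re, Complex.mul_im, Complex.sub_re,
      Complex.sub_im, Complex.conj_re, Complex.conj_im] at hk2 hnζ ⊢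
    nlinarith [hk2, hnζ, sq_nonneg a.re, sq_nonneg a.im]
  have hE1 : 2 * ‖v‖ <
      1 + (‖b‖) ^ 2 - (‖a‖) ^ 2 - (‖q‖) ^ 2 := by
    rcases eq_or_ne v 0 with hv0 | hv0
    · have hb' : b = (starRingEnd ℂ) a * q := by
        have h0 : b - (starRingEnd ℂ) a * q = 0 := hv0
        linear_combination h0
      have h1 := hsq 1 (by simp)
      have e : ((1 : ℂ) * ((starRingEnd ℂ) q * a - (starRingEnd ℂ) b)).re = 0 := by
        rw [hb']
        simp only [one_mul, map_mul, Complex.conj_conj, Complex.sub_re, Complex.mul_re,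
          Complex.conj_re, Complex.conj_im]
        ring
      rw [e] at h1
      rw [hv0]
      simp only [norm_zero]
      rw [← Complex.sq_norm a, ← Complex.sq_norm b, ← Complex.sq_norm q] at h1
      linarith
    · have hvpos : 0 < ‖v‖ := norm_pos_iff.mpr hv0
      have hvne : (‖v‖ : ℂ) ≠ 0 := by
        simpa using ne_of_gt hvpos
      set ζ : ℂ := v / (‖v‖ : ℂ) with hζdef
      have hζ : ‖ζ‖ = 1 := by
        rw [hζdef, norm_div, Complex.norm_real, Real.norm_eq_abs, abs_of_pos hvpos, div_self (ne_of_gt hvpos)]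
      have hcv : (starRingEnd ℂ) q * a - (starRingEnd ℂ) b = -(starRingEnd ℂ) v := by
        rw [hv]
        simp only [map_sub, map_mul, Complex.conj_conj]
        ring
      have hmc : v * (starRingEnd ℂ) v = ((‖v‖ ^ 2 : ℝ) : ℂ) := by
        rw [Complex.mul_conj, Complex.sq_norm]
      have e : (ζ * ((starRingEnd ℂ) q * a - (starRingEnd ℂ) b)).re = -(‖v‖) := by
        rw [hcv, hζdef]
        have e2 : v / (‖v‖ : ℂ) * -(starRingEnd ℂ) v = ((-(‖v‖) : ℝ) : ℂ) := by
          rw [div_mul_eq_mul_div, mul_neg, hmc]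
          push_cast
          field_simp
        rw [e2, Complex.ofReal_re]
      have h1 := hsq ζ hζ
      rw [e] at h1
      rw [← Complex.sq_norm a, ← Complex.sq_norm b, ← Complex.sq_norm q] at h1
      linarith
  have huv : Complex.normSq u - Complex.normSq v =
      (Complex.normSq a - Complex.normSq b) * (1 - Complex.normSq q) := by
    simp only [hu, hv, Complex.normSq_apply, Complex.mul_re, Complex.mul_im, Complex.sub_re,
      Complex.sub_im, Complex.conj_re, Complex.conj_im]
    ring
  rw [← Complex.sq_norm u, ← Complex.sq_norm v, ← Complex.sq_norm a, ← Complex.sq_norm b,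
    ← Complex.sq_norm q] at huv
  have t1 : ‖b‖ ≤ ‖v‖ + ‖a‖ * ‖q‖ := by
    have e0 : b = v + (starRingEnd ℂ) a * q := by rw [hv]; ring
    calc ‖b‖ = ‖v + (starRingEnd ℂ) a * q‖ := by rw [← e0]
      _ ≤ ‖v‖ + ‖(starRingEnd ℂ) a * q‖ := norm_add_le _ _
      _ = ‖v‖ + ‖a‖ * ‖q‖ := by
          rw [norm_mul, Complex.norm_conj]
  have t2 : ‖a‖ * ‖q‖ ≤ ‖v‖ + ‖b‖ := by
    have e0 : (starRingEnd ℂ) a * q = b - v := by rw [hv]; ring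
    calc ‖a‖ * ‖q‖ = ‖(starRingEnd ℂ) a * q‖ := by
          rw [norm_mul, Complex.norm_conj]
      _ = ‖b + -v‖ := by rw [e0]; ring_nf
      _ ≤ ‖b‖ + ‖-v‖ := norm_add_le _ _
      _ = ‖b‖ + ‖v‖ := by rw [norm_neg]
      _ = ‖v‖ + ‖b‖ := by ring
  have hαn : 0 ≤ ‖a‖ := norm_nonneg a
  have hβn : 0 ≤ ‖b‖ := norm_nonneg b
  have hρn : 0 ≤ ‖q‖ := norm_nonneg q
  have hVn : 0 ≤ ‖v‖ := norm_nonneg v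
  have hUn : 0 ≤ ‖u‖ := norm_nonneg u
  have sq1 : (‖a‖ + ‖q‖) ^ 2 < (1 + ‖b‖) ^ 2 := by
    nlinarith [hE1, t2]
  have h3 : ‖a‖ + ‖q‖ < 1 + ‖b‖ :=
    lt_of_pow_lt_pow_left₀ 2 (by linarith) sq1
  have sq2 : (‖a‖ - ‖q‖) ^ 2 < (1 - ‖b‖) ^ 2 := by
    nlinarith [hE1, t1]
  have h4 : |‖a‖ - ‖q‖| < 1 - ‖b‖ := by
    apply lt_of_pow_lt_pow_left₀ 2 (by linarith)
    rwa [_root_.sq_abs]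
  have h4a : ‖a‖ - ‖q‖ < 1 - ‖b‖ := (abs_lt.mp h4).2
  have h4b : ‖q‖ - ‖a‖ < 1 - ‖b‖ := by
    have := (abs_lt.mp h4).1
    linarith
  have hρ1 : ‖q‖ < 1 := by linarith
  have hd : (0:ℝ) < 1 - (‖q‖) ^ 2 := by nlinarith
  have hβ2 : (‖b‖) ^ 2 - (‖a‖) ^ 2 < 1 - (‖q‖) ^ 2 := by
    rcases le_or_gt (‖b‖) (‖a‖) with hc | hc
    · nlinarith
    · nlinarith [h4a, h4b, hρ1]
  have hV : ‖v‖ < 1 - (‖q‖) ^ 2 := by linarith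
  have hU2 : (‖u‖) ^ 2 < (1 - (‖q‖) ^ 2 - ‖v‖) ^ 2 := by
    nlinarith [huv, hE1, hd]
  have hU : ‖u‖ < 1 - (‖q‖) ^ 2 - ‖v‖ :=
    lt_of_pow_lt_pow_left₀ 2 (by linarith) hU2
  exact ⟨by linarith, hρ1⟩

theorem stmt1 (n j : ℕ) (hn : 1 ≤ n) (hj1 : 1 ≤ j) (hjn : j ≤ n - 1) (yj ynj q : ℂ)
    (h : (n.choose j : ℝ) * ‖yj - (starRingEnd ℂ) ynj * q‖ +
        ‖yj * ynj - (n.choose j : ℂ) ^ 2 * q‖ <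
      (n.choose j : ℝ) ^ 2 - ‖ynj‖ ^ 2) :
    ‖ynj - (starRingEnd ℂ) yj * q‖ +
        ‖yj - (starRingEnd ℂ) ynj * q‖ <
      (n.choose j : ℝ) * (1 - ‖q‖ ^ 2) ∧ ‖q‖ < 1 := by
  have hCpos : 0 < n.choose j := Nat.choose_pos (le_trans hjn (Nat.sub_le n 1))
  have hC0 : (0:ℝ) < (n.choose j : ℝ) := by exact_mod_cast hCpos
  have hCne : ((n.choose j : ℕ) : ℂ) ≠ 0 := by exact_mod_cast hCpos.ne'
  set a : ℂ := yj / ((n.choose j : ℕ) : ℂ) with ha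
  set b : ℂ := ynj / ((n.choose j : ℕ) : ℂ) with hb
  have e1 : yj = ((n.choose j : ℕ) : ℂ) * a := by rw [ha]; field_simp
  have e2 : ynj = ((n.choose j : ℕ) : ℂ) * b := by rw [hb]; field_simp
  have k1 : ‖yj - (starRingEnd ℂ) ynj * q‖ =
      (n.choose j : ℝ) * ‖a - (starRingEnd ℂ) b * q‖ := by
    have e : yj - (starRingEnd ℂ) ynj * q =
        ((n.choose j : ℕ) : ℂ) * (a - (starRingEnd ℂ) b * q) := by
      rw [e1, e2, map_mul, Complex.conj_natCast]; ring
    rw [e, norm_mul, Complex.norm_natCast]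
  have k2 : ‖yj * ynj - ((n.choose j : ℕ) : ℂ) ^ 2 * q‖ =
      (n.choose j : ℝ) ^ 2 * ‖a * b - q‖ := by
    have e : yj * ynj - ((n.choose j : ℕ) : ℂ) ^ 2 * q =
        ((n.choose j : ℕ) : ℂ) ^ 2 * (a * b - q) := by
      rw [e1, e2]; ring
    rw [e, norm_mul, norm_pow, Complex.norm_natCast]
  have k3 : (‖ynj‖) ^ 2 = (n.choose j : ℝ) ^ 2 * (‖b‖) ^ 2 := by
    rw [e2, norm_mul, Complex.norm_natCast]; ring
  have k4 : ‖ynj - (starRingEnd ℂ) yj * q‖ =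
      (n.choose j : ℝ) * ‖b - (starRingEnd ℂ) a * q‖ := by
    have e : ynj - (starRingEnd ℂ) yj * q =
        ((n.choose j : ℕ) : ℂ) * (b - (starRingEnd ℂ) a * q) := by
      rw [e1, e2, map_mul, Complex.conj_natCast]; ring
    rw [e, norm_mul, Complex.norm_natCast]
  rw [k1, k2, k3] at h
  have h' : ‖a - (starRingEnd ℂ) b * q‖ + ‖a * b - q‖ <
      1 - (‖b‖) ^ 2 := by
    have hC2 : (0:ℝ) < (n.choose j : ℝ) ^ 2 := pow_pos hC0 2
    nlinarith [h, hC2]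
  obtain ⟨g1, g2⟩ := core a b q h'
  refine ⟨?_, g2⟩
  rw [k4, k1]
  have := mul_lt_mul_of_pos_left g1 hC0
  linarith
end

section
/- Let ψ = (ψ_1,…,ψ_n) : 𝔻 → ℂ^n be analytic with ψ(0) = 0 and ψ'(0) = x = (x_1,…,x_n). Fix 1 ≤ j ≤ n-1 and set C = C(n,j). If for every λ ∈ 𝔻 \ {0}, C·|ψ_j(λ) − conj(ψ_{n-j}(λ))·ψ_n(λ)| + |ψ_j(λ)·ψ_{n-j}(λ) − C²·ψ_n(λ)| ≤ |λ|·(C² − |ψ_{n-j}(λ)|²), then |x_j|/C + |x_n| ≤ 1. -/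
open Complex Metric Filter Topology

private lemma key_alg (C A B Cc r : ℝ) (hB : B < C)     (h : C * A + C ^ 2 * Cc ≤ r * (C ^ 2 - B ^ 2) + B * A + C * B * Cc) :
    A + C * Cc ≤ r * (C + B) := by
  have hpos : 0 < C - B := sub_pos.mpr hB
  have h2 : (C - B) * (A + C * Cc) ≤ (C - B) * (r * (C + B)) := by nlinarith
  exact le_of_mul_le_mul_left h2 hpos

theorem stmt4 (n j : ℕ) (hn : 1 ≤ n) (hj1 : 1 ≤ j) (hjn : j ≤ n - 1)
    (ψ : ℕ → ℂ → ℂ) (x : ℕ → ℂ)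
    (hdiff : ∀ i, 1 ≤ i → i ≤ n → DifferentiableOn ℂ (ψ i) (ball (0 : ℂ) 1))
    (hψ0 : ∀ i, 1 ≤ i → i ≤ n → ψ i 0 = 0)
    (hderiv : ∀ i, 1 ≤ i → i ≤ n → deriv (ψ i) 0 = x i)
    (hbound : ∀ z ∈ ball (0 : ℂ) 1, z ≠ 0 →
      (n.choose j : ℝ) *
          ‖ψ j z - (starRingEnd ℂ) (ψ (n - j) z) * ψ n z‖ +
        ‖ψ j z * ψ (n - j) z - (n.choose j : ℂ) ^ 2 * ψ n z‖ ≤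
      ‖z‖ * ((n.choose j : ℝ) ^ 2 - (‖ψ (n - j) z‖) ^ 2)) :
    ‖x j‖ / (n.choose j : ℝ) + ‖x n‖ ≤ 1 := by
  have hn2 : 2 ≤ n := by omega
  have hjn' : j ≤ n := by omega
  have hnj1 : 1 ≤ n - j := by omega
  have hnjn : n - j ≤ n := by omega
  set C : ℝ := (n.choose j : ℝ) with hCdef
  have hCpos : (0 : ℝ) < C := by
    rw [hCdef]
    exact_mod_cast Nat.choose_pos hjn'
  have h0mem : (0 : ℂ) ∈ ball (0 : ℂ) 1 := by simp
  have hballnhds : ball (0 : ℂ) 1 ∈ 𝓝 (0 : ℂ) := isOpen_ball.mem_nhds h0mem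
  -- derivative limits
  have slopelim : ∀ i, 1 ≤ i → i ≤ n →
      Tendsto (fun z => ψ i z / z) (𝓝[≠] (0 : ℂ)) (𝓝 (x i)) := by
    intro i hi1 hin
    have hda : DifferentiableAt ℂ (ψ i) 0 :=
      (hdiff i hi1 hin).differentiableAt hballnhds
    have hd : HasDerivAt (ψ i) (x i) 0 := by
      have := hda.hasDerivAt
      rwa [hderiv i hi1 hin] at this
    rw [hasDerivAt_iff_tendsto_slope] at hd
    refine hd.congr (fun z => ?_)
    simp [slope_def_field, hψ0 i hi1 hin]
  have hj_lim := slopelim j hj1 hjn'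
  have hn_lim := slopelim n hn le_rfl
  have habsj : Tendsto (fun z => ‖ψ j z / z‖) (𝓝[≠] (0 : ℂ))
      (𝓝 (‖x j‖)) := (continuous_norm.tendsto _).comp hj_lim
  have habsn : Tendsto (fun z => ‖ψ n z / z‖) (𝓝[≠] (0 : ℂ))
      (𝓝 (‖x n‖)) := (continuous_norm.tendsto _).comp hn_lim
  -- continuity of ψ (n - j) at 0
  have hcont : Tendsto (fun z => ‖ψ (n - j) z‖) (𝓝[≠] (0 : ℂ)) (𝓝 0) := by
    have hca : ContinuousAt (ψ (n - j)) 0 :=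
      ((hdiff (n - j) hnj1 hnjn).differentiableAt hballnhds).continuousAt
    have h1 : Tendsto (ψ (n - j)) (𝓝 (0 : ℂ)) (𝓝 (0 : ℂ)) := by
      have := hca.tendsto
      rwa [hψ0 (n - j) hnj1 hnjn] at this
    have := (continuous_norm.tendsto _).comp h1
    simp only [Function.comp_def] at this
    simpa using this.mono_left nhdsWithin_le_nhds
  -- eventual inequality
  have hev : ∀ᶠ z in 𝓝[≠] (0 : ℂ),
      ‖ψ j z / z‖ + C * ‖ψ n z / z‖
        ≤ C + ‖ψ (n - j) z‖ := by
    have hball' : ∀ᶠ z in 𝓝[≠] (0 : ℂ), z ∈ ball (0 : ℂ) 1 :=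
      mem_nhdsWithin_of_mem_nhds hballnhds
    have hBlt : ∀ᶠ z in 𝓝[≠] (0 : ℂ), ‖ψ (n - j) z‖ < C :=
      hcont.eventually_lt_const hCpos
    filter_upwards [hball', hBlt, self_mem_nhdsWithin] with z hzball hzB hz0
    set a := ψ j z
    set b := ψ (n - j) z
    set c := ψ n z
    have hb := hbound z hzball hz0
    set A := ‖a‖
    set B := ‖b‖
    set Cc := ‖c‖
    have hzpos : (0 : ℝ) < ‖z‖ := by
      simpa using norm_pos_iff.mpr hz0
    have habs1 : A ≤ ‖a - (starRingEnd ℂ) b * c‖ + B * Cc := by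
      calc A = ‖(a - (starRingEnd ℂ) b * c) + (starRingEnd ℂ) b * c‖ := by
            rw [sub_add_cancel]
        _ ≤ ‖a - (starRingEnd ℂ) b * c‖ + ‖(starRingEnd ℂ) b * c‖ :=
            norm_add_le _ _
        _ = ‖a - (starRingEnd ℂ) b * c‖ + B * Cc := by
            rw [norm_mul, Complex.norm_conj]
    have habs2 : C ^ 2 * Cc ≤ ‖a * b - (n.choose j : ℂ) ^ 2 * c‖ + A * B := by
      have : (n.choose j : ℂ) ^ 2 * c = a * b - (a * b - (n.choose j : ℂ) ^ 2 * c) := by ring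
      calc C ^ 2 * Cc = ‖(n.choose j : ℂ) ^ 2 * c‖ := by
            rw [norm_mul, norm_pow]
            simp [hCdef]
            exact Or.inl rfl
        _ = ‖(a * b - (a * b - (n.choose j : ℂ) ^ 2 * c))‖ := by rw [← this]
        _ ≤ ‖a * b‖ + ‖a * b - (n.choose j : ℂ) ^ 2 * c‖ :=
            norm_sub_le _ _
        _ = ‖a * b - (n.choose j : ℂ) ^ 2 * c‖ + A * B := by
            rw [norm_mul]; ring
    have hkey : A + C * Cc ≤ ‖z‖ * (C + B) := by
      apply key_alg C A B Cc (‖z‖) hzB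
      nlinarith [hb, habs1, habs2, hCpos]
    have hrw : ‖ψ j z / z‖ + C * ‖ψ n z / z‖
        = (A + C * Cc) / ‖z‖ := by
      rw [norm_div, norm_div]; ring
    rw [hrw, div_le_iff₀ hzpos]
    calc A + C * Cc ≤ ‖z‖ * (C + B) := hkey
      _ = (C + B) * ‖z‖ := by ring
  -- take limits
  have hlim1 : Tendsto (fun z => ‖ψ j z / z‖ + C * ‖ψ n z / z‖)
      (𝓝[≠] (0 : ℂ)) (𝓝 (‖x j‖ + C * ‖x n‖)) :=
    habsj.add ((tendsto_const_nhds.mul habsn))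
  have hlim2 : Tendsto (fun z => C + ‖ψ (n - j) z‖) (𝓝[≠] (0 : ℂ))
      (𝓝 (C + 0)) := tendsto_const_nhds.add hcont
  have hfin : ‖x j‖ + C * ‖x n‖ ≤ C + 0 :=
    le_of_tendsto_of_tendsto hlim1 hlim2 hev
  rw [add_zero] at hfin
  have heq : ‖x j‖ / C + ‖x n‖
      = (‖x j‖ + C * ‖x n‖) / C := by
    field_simp
  rw [heq, div_le_one hCpos]
  exact hfin
end

section
/- Let x_1, x_2, x_3 ∈ ℂ with x_1 ≠ 0, |x_2| ≤ |x_1|, and max{|x_1|/3, |x_2|/3} + |x_3| ≤ 1. Then the 2×2 matrix B with entries B_{11} = x_1/√(3|x_1|), B_{12} = ρ, B_{21} = −x_3/√(1 − |x_1|/3), B_{22} = x_2/√(3|x_1|), where ρ = x_1·x_2·conj(x_3)·√(3−|x_1|) / (√3·|x_1|·(3 − |x_1| − 3|x_3|²)), has operator norm at most 1, provided 3 − |x_1| − 3|x_3|² ≠ 0. -/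
open Complex

noncomputable def opNorm2 (B : Matrix (Fin 2) (Fin 2) ℂ) : ℝ :=
  ‖LinearMap.toContinuousLinearMap (Matrix.toEuclideanLin B)‖

lemma opNorm2_le_one (B : Matrix (Fin 2) (Fin 2) ℂ)
    (h : ∀ u w : ℂ, Complex.normSq (B 0 0 * u + B 0 1 * w) + Complex.normSq (B 1 0 * u + B 1 1 * w)
      ≤ Complex.normSq u + Complex.normSq w) :
    opNorm2 B ≤ 1 := by
  unfold opNorm2
  apply ContinuousLinearMap.opNorm_le_bound _ zero_le_one
  intro v
  rw [one_mul, LinearMap.coe_toContinuousLinearMap']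
  rw [EuclideanSpace.norm_eq, EuclideanSpace.norm_eq]
  apply Real.sqrt_le_sqrt
  have happ : ∀ i, (Matrix.toEuclideanLin B v) i = B i 0 * v 0 + B i 1 * v 1 := by
    intro i
    rw [Matrix.toEuclideanLin_apply]
    simp [Matrix.mulVec, dotProduct, Fin.sum_univ_two]
  rw [Fin.sum_univ_two, Fin.sum_univ_two, happ, happ]
  simpa [Complex.sq_norm] using h (v 0) (v 1)

lemma quadkey (A Bb g X Y : ℝ) (hA0 : 0 ≤ A) (hB0 : 0 ≤ Bb) (hg0 : 0 ≤ g)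
    (hg2 : g^2 ≤ A*Bb) :
    (1-A)*X^2 + (1-Bb)*Y^2 + 2*g*X*Y ≤ X^2 + Y^2 := by
  rcases eq_or_lt_of_le hA0 with hA | hA
  · have hgz : g = 0 := by nlinarith [sq_nonneg g]
    rw [hgz, ← hA]
    nlinarith [mul_nonneg hB0 (sq_nonneg Y)]
  · nlinarith [sq_nonneg (A*X - g*Y), mul_nonneg (sub_nonneg.2 hg2) (sq_nonneg Y),
      mul_nonneg hB0 (sq_nonneg Y), mul_nonneg hA0 (sq_nonneg X)]

lemma realkey (a b c K X Y : ℝ) (ha : 0 < a) (ha3 : a < 3) (hb : 0 ≤ b) (hba : b ≤ a)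
    (hc : 0 ≤ c) (hE : 9*c^2 ≤ (3-a)^2) (hD : 0 < 3-a-3*c^2)
    (hK : 0 < K) (hK2 : K^2 = 9*a*(3-a)*(3-a-3*c^2)^2) :
    (a/3 + 3*c^2/(3-a)) * X^2 + (b^2/(3*a) + b^2*c^2*(3-a)/(3*(3-a-3*c^2)^2)) * Y^2
      + 2 * (b*c*((3-a)^2-9*c^2)/K) * X * Y ≤ X^2 + Y^2 := by
  set D : ℝ := 3 - a - 3*c^2 with hDdef
  set E : ℝ := (3-a)^2 - 9*c^2 with hEdef
  have hEnn : 0 ≤ E := by rw [hEdef]; linarith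
  have h3a : (0:ℝ) < 3 - a := by linarith
  set g : ℝ := b*c*E/K with hgdef
  have hg0 : 0 ≤ g := by positivity
  set A : ℝ := E/(3*(3-a)) with hAdef
  set N : ℝ := 3*a*D^2 - b^2*D^2 - a*b^2*c^2*(3-a) with hNdef
  set Bb : ℝ := N/(3*a*D^2) with hBdef
  have hα : a/3 + 3*c^2/(3-a) = 1 - A := by
    rw [hAdef, hEdef]; field_simp; ring
  have hβ : b^2/(3*a) + b^2*c^2*(3-a)/(3*D^2) = 1 - Bb := by
    rw [hBdef, hNdef]; field_simp; ring
  have hA0 : 0 ≤ A := by positivity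
  have h3 : 0 ≤ 3*a*D - b^2*(3-a) := by
    have e : 3*a*D - b^2*(3-a) = a*E + (a-b)*(a+b)*(3-a) := by rw [hDdef, hEdef]; ring
    rw [e]
    have h5 := mul_nonneg ha.le hEnn
    have h6 : 0 ≤ (a-b)*(a+b)*(3-a) :=
      mul_nonneg (mul_nonneg (by linarith) (by linarith)) h3a.le
    linarith
  have hNkey : b^2*c^2*E ≤ N := by
    have h2 : N - b^2*c^2*E = D*(3*a*D - b^2*(3-a)) := by rw [hNdef, hEdef, hDdef]; ring
    have h4 := mul_nonneg hD.le h3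
    linarith
  have hB0 : 0 ≤ Bb := by
    rw [hBdef]
    apply div_nonneg _ (by positivity)
    have := mul_nonneg (mul_nonneg (sq_nonneg b) (sq_nonneg c)) hEnn
    nlinarith
  have hg2 : g^2 ≤ A * Bb := by
    rw [hgdef, hAdef, hBdef, div_pow, hK2]
    rw [div_mul_div_comm, div_le_div_iff₀ (by positivity) (by positivity)]
    calc (b*c*E)^2 * (3*(3-a) * (3*a*D^2)) = (b^2*c^2*E * E) * (9*a*(3-a)*D^2) := by ring
      _ ≤ (N*E) * (9*a*(3-a)*D^2) :=
          mul_le_mul_of_nonneg_right (mul_le_mul_of_nonneg_right hNkey hEnn) (by positivity)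
      _ = E*N*(9*a*(3-a)*D^2) := by ring
  rw [hα, hβ]
  linarith [quadkey A Bb g X Y hA0 hB0 hg0 hg2]


lemma stmt6_aux (x1 x2 x3 : ℂ) (a b c D s t r q K : ℝ)
    (hadef : a = ‖x1‖) (hbdef : b = ‖x2‖) (hcdef : c = ‖x3‖)
    (ha : 0 < a) (hb : 0 ≤ b) (h12 : b ≤ a) (hc : 0 ≤ c) (ha3 : a < 3)
    (hE : 9*c^2 ≤ (3-a)^2) (hD : 0 < D) (hDdef : D = 3 - a - 3*c^2)
    (hs : 0 < s) (hs2 : s^2 = 3*a) (ht : 0 < t) (ht2 : t^2 = 3-a)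
    (hr : 0 < r) (hr2 : r^2 = 3) (hq : 0 < q) (hq2 : q^2 = 1 - a/3)
    (hrq : r*q = t) (hK : 0 < K) (hKdef : K = s*r*t*D) (hK2 : K^2 = 9*a*(3-a)*D^2) :
    opNorm2 !![x1 / (s:ℂ), x1 * x2 * (starRingEnd ℂ) x3 * (t:ℂ) / ((r:ℂ) * (a:ℂ) * (D:ℂ));
        -x3 / (q:ℂ), x2 / (s:ℂ)] ≤ 1 := by
  subst hDdef
  apply opNorm2_le_one
  intro u w
  set B00 : ℂ := x1 / (s:ℂ) with h00
  set B01 : ℂ := x1 * x2 * (starRingEnd ℂ) x3 * (t:ℂ) / ((r:ℂ) * (a:ℂ) * ((3 - a - 3*c^2 : ℝ):ℂ)) with h01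
  set B10 : ℂ := -x3 / (q:ℂ) with h10
  set B11 : ℂ := x2 / (s:ℂ) with h11
  show Complex.normSq (B00 * u + B01 * w) + Complex.normSq (B10 * u + B11 * w)
      ≤ Complex.normSq u + Complex.normSq w
  clear_value B00 B01 B10 B11
  have hx1c : x1 * (starRingEnd ℂ) x1 = ((a : ℝ) : ℂ)^2 := by
    rw [Complex.mul_conj]; norm_cast; rw [hadef]; exact (Complex.sq_norm x1).symm
  have hEnn : 0 ≤ (3-a)^2 - 9*c^2 := by linarith
  have hGre : a^2*t/(s*r*a*(3 - a - 3*c^2)) - 1/(q*s) = -(((3-a)^2 - 9*c^2)/K) := by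
    have hq' : q = t/r := by rw [eq_div_iff hr.ne']; linarith [hrq]
    rw [hq', hKdef]
    field_simp
    linear_combination a * ht2 - (3 - a - 3*c^2) * hr2
  have hGamma : B00 * (starRingEnd ℂ) B01 + B10 * (starRingEnd ℂ) B11
      = (starRingEnd ℂ) x2 * x3 * ((-(((3-a)^2 - 9*c^2)/K) : ℝ) : ℂ) := by
    rw [← hGre, h00, h01, h10, h11]
    have h1 : (starRingEnd ℂ) (x1 * x2 * (starRingEnd ℂ) x3 * (t:ℂ) / ((r:ℂ) * (a:ℂ) * ((3 - a - 3*c^2 : ℝ):ℂ)))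
        = (starRingEnd ℂ) x1 * (starRingEnd ℂ) x2 * x3 * (t:ℂ) / ((r:ℂ) * (a:ℂ) * ((3 - a - 3*c^2 : ℝ):ℂ)) := by
      simp [map_div₀, map_mul, Complex.conj_ofReal, map_ofNat, map_sub, map_pow]
    have h2 : (starRingEnd ℂ) (x2 / (s:ℂ)) = (starRingEnd ℂ) x2 / (s:ℂ) := by
      simp [map_div₀, Complex.conj_ofReal]
    have hco : ((a^2*t/(s*r*a*(3-a-3*c^2)) - 1/(q*s) : ℝ) : ℂ)
        = ((a:ℝ):ℂ)^2 * ((t:ℝ):ℂ) / (((s:ℝ):ℂ)*((r:ℝ):ℂ)*((a:ℝ):ℂ)*((3-a-3*c^2 : ℝ):ℂ))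
          - 1/(((q:ℝ):ℂ)*((s:ℝ):ℂ)) := by
      rw [Complex.ofReal_sub, Complex.ofReal_div, Complex.ofReal_div, Complex.ofReal_mul,
        Complex.ofReal_mul, Complex.ofReal_mul, Complex.ofReal_mul, Complex.ofReal_mul,
        Complex.ofReal_pow, Complex.ofReal_one]
    rw [h1, h2, hco, ← hx1c]
    ring
  have hss : (s:ℝ) * s = 3*a := by rw [← pow_two]; exact hs2
  have hqq : (q:ℝ) * q = 1 - a/3 := by rw [← pow_two]; exact hq2
  have n00 : Complex.normSq B00 = a/3 := by
    rw [h00, map_div₀, Complex.normSq_ofReal, hss, ← Complex.sq_norm, ← hadef]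
    field_simp
  have n11 : Complex.normSq B11 = b^2/(3*a) := by
    rw [h11, map_div₀, Complex.normSq_ofReal, hss, ← Complex.sq_norm, ← hbdef]
  have n10 : Complex.normSq B10 = 3*c^2/(3-a) := by
    rw [h10, map_div₀, Complex.normSq_ofReal, hqq, Complex.normSq_neg, ← Complex.sq_norm, ← hcdef]
    rw [div_eq_div_iff (by linarith) (by linarith)]
    ring
  have n01 : Complex.normSq B01 = b^2*c^2*(3-a)/(3*(3 - a - 3*c^2)^2) := by
    rw [h01]
    simp only [map_div₀, map_mul, Complex.normSq_ofReal, Complex.normSq_conj]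
    rw [← Complex.sq_norm x1, ← Complex.sq_norm x2, ← Complex.sq_norm x3, ← hadef, ← hbdef, ← hcdef]
    rw [div_eq_div_iff (by positivity) (by positivity)]
    linear_combination (3*a^2*b^2*c^2*(3 - a - 3*c^2)^2) * ht2
      - (b^2*c^2*(3-a)*a^2*(3 - a - 3*c^2)^2) * hr2
  have expand : Complex.normSq (B00 * u + B01 * w) + Complex.normSq (B10 * u + B11 * w)
      = Complex.normSq B00 * Complex.normSq u + Complex.normSq B01 * Complex.normSq w
        + Complex.normSq B10 * Complex.normSq u + Complex.normSq B11 * Complex.normSq w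
        + 2*(((starRingEnd ℂ) x2 * x3 * ((-(((3-a)^2 - 9*c^2)/K) : ℝ) : ℂ)) * (u * (starRingEnd ℂ) w)).re := by
    rw [Complex.normSq_add, Complex.normSq_add,
      map_mul Complex.normSq B00 u, map_mul Complex.normSq B01 w,
      map_mul Complex.normSq B10 u, map_mul Complex.normSq B11 w, ← hGamma]
    have hsum : (B00 * u * (starRingEnd ℂ) (B01 * w)).re + (B10 * u * (starRingEnd ℂ) (B11 * w)).re
        = ((B00 * (starRingEnd ℂ) B01 + B10 * (starRingEnd ℂ) B11) * (u * (starRingEnd ℂ) w)).re := by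
      rw [← Complex.add_re]
      congr 1
      rw [map_mul, map_mul]
      ring
    linarith [hsum]
  have hre : (((starRingEnd ℂ) x2 * x3 * ((-(((3-a)^2 - 9*c^2)/K) : ℝ) : ℂ)) * (u * (starRingEnd ℂ) w)).re
      ≤ b*c*(((3-a)^2 - 9*c^2)/K) * (‖u‖ * ‖w‖) := by
    calc (((starRingEnd ℂ) x2 * x3 * ((-(((3-a)^2 - 9*c^2)/K) : ℝ) : ℂ)) * (u * (starRingEnd ℂ) w)).re
        ≤ ‖(((starRingEnd ℂ) x2 * x3 * ((-(((3-a)^2 - 9*c^2)/K) : ℝ) : ℂ)) * (u * (starRingEnd ℂ) w))‖ :=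
          Complex.re_le_norm _
      _ = b*c*(((3-a)^2 - 9*c^2)/K) * (‖u‖ * ‖w‖) := by
          rw [norm_mul, norm_mul, norm_mul, norm_mul, Complex.norm_conj, Complex.norm_conj,
            Complex.norm_real, Real.norm_eq_abs, ← hbdef, ← hcdef, abs_neg,
            _root_.abs_of_nonneg (by positivity : (0:ℝ) ≤ ((3-a)^2 - 9*c^2)/K)]
  have nu : Complex.normSq u = ‖u‖ ^ 2 := (Complex.sq_norm u).symm
  have nw : Complex.normSq w = ‖w‖ ^ 2 := (Complex.sq_norm w).symm
  have key := realkey a b c K (‖u‖) (‖w‖) ha ha3 hb h12 hc hE hD hK hK2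
  calc Complex.normSq (B00 * u + B01 * w) + Complex.normSq (B10 * u + B11 * w)
      = Complex.normSq B00 * Complex.normSq u + Complex.normSq B01 * Complex.normSq w
        + Complex.normSq B10 * Complex.normSq u + Complex.normSq B11 * Complex.normSq w
        + 2*(((starRingEnd ℂ) x2 * x3 * ((-(((3-a)^2 - 9*c^2)/K) : ℝ) : ℂ)) * (u * (starRingEnd ℂ) w)).re := expand
    _ ≤ (a/3) * Complex.normSq u + (b^2*c^2*(3-a)/(3*(3 - a - 3*c^2)^2)) * Complex.normSq w
        + (3*c^2/(3-a)) * Complex.normSq u + (b^2/(3*a)) * Complex.normSq w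
        + 2*(b*c*(((3-a)^2 - 9*c^2)/K) * (‖u‖ * ‖w‖)) := by
          rw [n00, n01, n10, n11]; linarith [hre]
    _ = (a/3 + 3*c^2/(3-a)) * ‖u‖ ^ 2
        + (b^2/(3*a) + b^2*c^2*(3-a)/(3*(3 - a - 3*c^2)^2)) * ‖w‖ ^ 2
        + 2*(b*c*((3-a)^2-9*c^2)/K) * ‖u‖ * ‖w‖ := by
          rw [nu, nw]; ring
    _ ≤ Complex.normSq u + Complex.normSq w := by
          rw [nu, nw]; exact key

theorem stmt6 (x1 x2 x3 : ℂ) (hx1 : x1 ≠ 0)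
    (h12 : ‖x2‖ ≤ ‖x1‖)
    (hmax : max (‖x1‖ / 3) (‖x2‖ / 3) + ‖x3‖ ≤ 1)
    (hden : 3 - ‖x1‖ - 3 * (‖x3‖) ^ 2 ≠ 0) :
    opNorm2
      !![x1 / ((Real.sqrt (3 * ‖x1‖) : ℝ) : ℂ),
          x1 * x2 * (starRingEnd ℂ) x3 * ((Real.sqrt (3 - ‖x1‖) : ℝ) : ℂ) /
            (((Real.sqrt 3 : ℝ) : ℂ) * ((‖x1‖ : ℝ) : ℂ) *
              ((3 - ‖x1‖ - 3 * (‖x3‖) ^ 2 : ℝ) : ℂ));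
          -x3 / ((Real.sqrt (1 - ‖x1‖ / 3) : ℝ) : ℂ),
          x2 / ((Real.sqrt (3 * ‖x1‖) : ℝ) : ℂ)] ≤ 1 := by
  have ha : 0 < ‖x1‖ := norm_pos_iff.2 hx1
  have hb : 0 ≤ ‖x2‖ := norm_nonneg x2
  have hc : 0 ≤ ‖x3‖ := norm_nonneg x3
  have hac : ‖x1‖ + 3*‖x3‖ ≤ 3 := by
    have h1 : ‖x1‖/3 ≤ max (‖x1‖/3) (‖x2‖/3) := le_max_left _ _
    linarith
  have hc1 : ‖x3‖ < 1 := by linarith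
  have hD0 : (0:ℝ) ≤ 3 - ‖x1‖ - 3*(‖x3‖)^2 := by
    nlinarith [mul_nonneg hc (by linarith : (0:ℝ) ≤ 1 - ‖x3‖)]
  have hD : (0:ℝ) < 3 - ‖x1‖ - 3*(‖x3‖)^2 := lt_of_le_of_ne hD0 (Ne.symm hden)
  have ha3 : ‖x1‖ < 3 := by nlinarith [sq_nonneg (‖x3‖)]
  have hE : 9*(‖x3‖)^2 ≤ (3-‖x1‖)^2 := by nlinarith
  have hs2 : (Real.sqrt (3*‖x1‖))^2 = 3*‖x1‖ := Real.sq_sqrt (by positivity)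
  have ht2 : (Real.sqrt (3-‖x1‖))^2 = 3-‖x1‖ := Real.sq_sqrt (by linarith)
  have hr2 : (Real.sqrt 3)^2 = (3:ℝ) := Real.sq_sqrt (by norm_num)
  have hq2 : (Real.sqrt (1-‖x1‖/3))^2 = 1-‖x1‖/3 := Real.sq_sqrt (by linarith)
  have hs : 0 < Real.sqrt (3*‖x1‖) := Real.sqrt_pos.2 (by positivity)
  have ht : 0 < Real.sqrt (3-‖x1‖) := Real.sqrt_pos.2 (by linarith)
  have hr : 0 < Real.sqrt 3 := Real.sqrt_pos.2 (by norm_num)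
  have hq : 0 < Real.sqrt (1-‖x1‖/3) := Real.sqrt_pos.2 (by linarith)
  have hrq : Real.sqrt 3 * Real.sqrt (1-‖x1‖/3) = Real.sqrt (3-‖x1‖) := by
    rw [← Real.sqrt_mul (by norm_num : (0:ℝ) ≤ 3)]
    congr 1; ring
  have hK2 : (Real.sqrt (3*‖x1‖) * Real.sqrt 3 * Real.sqrt (3-‖x1‖) *
      (3 - ‖x1‖ - 3*(‖x3‖)^2))^2
      = 9*‖x1‖*(3-‖x1‖)*(3 - ‖x1‖ - 3*(‖x3‖)^2)^2 := by
    have h : ∀ A B C DD : ℝ, (A*B*C*DD)^2 = A^2*B^2*C^2*DD^2 := by intros; ring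
    rw [h, hs2, hr2, ht2]; ring
  exact stmt6_aux x1 x2 x3 _ _ _ _ _ _ _ _ _ rfl rfl rfl ha hb h12 hc ha3 hE hD rfl
    hs hs2 ht ht2 hr hr2 hq hq2 hrq (by positivity) rfl hK2
end

section
/- Let Q : H_2 → K_1, S : H_2 → K_2, R : H_1 → K_2 be bounded operators between Hilbert spaces such that the column operator [Q; S] : H_2 → K_1 ⊕ K_2 and the row operator [R S] : H_1 ⊕ H_2 → K_2 are both contractions. Then there exists a bounded operator P : H_1 → K_1 such that the block operator [[P, Q],[R, S]] : H_1 ⊕ H_2 → K_1 ⊕ K_2 is a contraction. -/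
set_option maxHeartbeats 1000000

open ContinuousLinearMap Polynomial RCLike
open scoped ComplexInnerProductSpace
lemma aux_intertwine {H K : Type*} [NormedAddCommGroup H] [InnerProductSpace ℂ H] [CompleteSpace H]
    [NormedAddCommGroup K] [InnerProductSpace ℂ K] [CompleteSpace K]
    (S : H →L[ℂ] K) (a : H →L[ℂ] H) (b : K →L[ℂ] K)
    (ha : IsSelfAdjoint a) (hb : IsSelfAdjoint b)
    (hcomm : ∀ x, S (a x) = b (S x)) :
    ∀ x, S (cfc Real.sqrt a x) = cfc Real.sqrt b (S x) := by
  have hpow : ∀ (n : ℕ) (x : H), S ((a ^ n) x) = (b ^ n) (S x) := by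
    intro n
    induction n with
    | zero => simp
    | succ n ih =>
      intro x
      simp only [pow_succ, ContinuousLinearMap.mul_apply]
      rw [ih, ← hcomm]
  have hpoly : ∀ (p : ℝ[X]) (x : H), S ((aeval a p) x) = (aeval b p) (S x) := by
    intro p
    induction p using Polynomial.induction_on with
    | C r => intro x; simp [Algebra.algebraMap_eq_smul_one]
    | add p q hp hq => intro x; simp [hp, hq]
    | monomial n r ih =>
      intro x
      simp only [map_mul, aeval_C, map_pow, aeval_X, ContinuousLinearMap.mul_apply,
        Algebra.algebraMap_eq_smul_one, smul_apply, ContinuousLinearMap.one_apply, map_smul_of_tower, hpow]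
  have key : S ∘L cfc Real.sqrt a = cfc Real.sqrt b ∘L S := by
    set m : ℝ := max (‖a‖ * ‖(1 : H →L[ℂ] H)‖) (‖b‖ * ‖(1 : K →L[ℂ] K)‖) with hm
    have hσa : spectrum ℝ a ⊆ Set.Icc (-m) m := by
      intro x hx
      have h1 := spectrum.subset_closedBall_norm_mul (𝕜 := ℝ) a hx
      rw [Metric.mem_closedBall, dist_zero_right, Real.norm_eq_abs, abs_le] at h1
      exact ⟨by linarith [h1.1, le_max_left (‖a‖ * ‖(1 : H →L[ℂ] H)‖) (‖b‖ * ‖(1 : K →L[ℂ] K)‖)],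
        by linarith [h1.2, le_max_left (‖a‖ * ‖(1 : H →L[ℂ] H)‖) (‖b‖ * ‖(1 : K →L[ℂ] K)‖)]⟩
    have hσb : spectrum ℝ b ⊆ Set.Icc (-m) m := by
      intro x hx
      have h1 := spectrum.subset_closedBall_norm_mul (𝕜 := ℝ) b hx
      rw [Metric.mem_closedBall, dist_zero_right, Real.norm_eq_abs, abs_le] at h1
      exact ⟨by linarith [h1.1, le_max_right (‖a‖ * ‖(1 : H →L[ℂ] H)‖) (‖b‖ * ‖(1 : K →L[ℂ] K)‖)],
        by linarith [h1.2, le_max_right (‖a‖ * ‖(1 : H →L[ℂ] H)‖) (‖b‖ * ‖(1 : K →L[ℂ] K)‖)]⟩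
    have main : ∀ ε > (0:ℝ), ‖S ∘L cfc Real.sqrt a - cfc Real.sqrt b ∘L S‖ ≤ 0 + ε := by
      intro ε hε
      rw [zero_add]
      have hS1 : (0:ℝ) < ‖S‖ + 1 := by positivity
      set δ : ℝ := ε / (2 * (‖S‖ + 1)) with hδdef
      have hδ : 0 < δ := by positivity
      obtain ⟨p, hp⟩ := exists_polynomial_near_of_continuousOn (-m) m Real.sqrt
        (Real.continuous_sqrt.continuousOn) δ hδ
      have hnorm_a : ‖cfc Real.sqrt a - aeval a p‖ ≤ δ := by
        rw [← cfc_polynomial p a, ← cfc_sub (fun x => Real.sqrt x) (fun x => p.eval x) a]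
        refine norm_cfc_le hδ.le fun x hx => ?_
        rw [Real.norm_eq_abs, abs_sub_comm]
        exact (hp x (hσa hx)).le
      have hnorm_b : ‖cfc Real.sqrt b - aeval b p‖ ≤ δ := by
        rw [← cfc_polynomial p b, ← cfc_sub (fun x => Real.sqrt x) (fun x => p.eval x) b]
        refine norm_cfc_le hδ.le fun x hx => ?_
        rw [Real.norm_eq_abs, abs_sub_comm]
        exact (hp x (hσb hx)).le
      have hop : S ∘L aeval a p = aeval b p ∘L S := by ext x; exact hpoly p x
      have decomp : S ∘L cfc Real.sqrt a - cfc Real.sqrt b ∘L S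
          = S ∘L (cfc Real.sqrt a - aeval a p) - (cfc Real.sqrt b - aeval b p) ∘L S := by
        rw [ContinuousLinearMap.comp_sub, ContinuousLinearMap.sub_comp, hop]
        abel
      rw [decomp]
      have hstep : ‖S ∘L (cfc Real.sqrt a - aeval a p) - (cfc Real.sqrt b - aeval b p) ∘L S‖
          ≤ ‖S‖ * δ + δ * ‖S‖ := by
        refine (norm_sub_le _ _).trans ?_
        gcongr
        · exact (opNorm_comp_le _ _).trans (by gcongr)
        · exact (opNorm_comp_le _ _).trans (by gcongr)
      refine hstep.trans ?_
      have h2 : ‖S‖ * δ + δ * ‖S‖ ≤ (‖S‖ + 1) * δ + δ * (‖S‖ + 1) := by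
        gcongr <;> linarith
      refine h2.trans ?_
      have : (‖S‖ + 1) * δ + δ * (‖S‖ + 1) = ε := by
        rw [hδdef]; field_simp; ring
      linarith
    have hle : ‖S ∘L cfc Real.sqrt a - cfc Real.sqrt b ∘L S‖ ≤ 0 :=
      le_of_forall_pos_le_add main
    have h0 : S ∘L cfc Real.sqrt a - cfc Real.sqrt b ∘L S = 0 := by
      rwa [← norm_le_zero_iff]
    exact sub_eq_zero.mp h0
  intro x
  rw [← comp_apply, key, comp_apply]

open ContinuousLinearMap

lemma aux_factor {H K : Type*} [NormedAddCommGroup H] [InnerProductSpace ℂ H] [CompleteSpace H]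
    [NormedAddCommGroup K] [InnerProductSpace ℂ K] [CompleteSpace K]
    (A : H →L[ℂ] K) (B : H →L[ℂ] H) (hAB : ∀ h, ‖A h‖ ≤ ‖B h‖) :
    ∃ X : H →L[ℂ] K, (∀ z, ‖X z‖ ≤ ‖z‖) ∧ ∀ h, X (B h) = A h := by
  classical
  set N : Submodule ℂ H := LinearMap.range (B : H →ₗ[ℂ] H) with hN
  have hker : LinearMap.ker (B : H →ₗ[ℂ] H) ≤ LinearMap.ker (A : H →ₗ[ℂ] K) := by
    intro x hx
    rw [LinearMap.mem_ker] at hx ⊢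
    have := hAB x
    rw [show ((B : H →ₗ[ℂ] H) x) = B x from rfl] at hx
    rw [hx, norm_zero] at this
    exact norm_le_zero_iff.mp this
  set f₀ : (H ⧸ LinearMap.ker (B : H →ₗ[ℂ] H)) →ₗ[ℂ] K :=
    (LinearMap.ker (B : H →ₗ[ℂ] H)).liftQ (A : H →ₗ[ℂ] K) hker with hf₀
  set e : (H ⧸ LinearMap.ker (B : H →ₗ[ℂ] H)) ≃ₗ[ℂ] N :=
    (B : H →ₗ[ℂ] H).quotKerEquivRange with he
  set f₁ : N →ₗ[ℂ] K := f₀ ∘ₗ (e.symm : N →ₗ[ℂ] _) with hf₁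
  have hf₁B : ∀ h : H, f₁ ⟨B h, LinearMap.mem_range_self _ h⟩ = A h := by
    intro h
    have h1 : e (Submodule.Quotient.mk h) = ⟨B h, LinearMap.mem_range_self _ h⟩ :=
      Subtype.ext ((B : H →ₗ[ℂ] H).quotKerEquivRange_apply_mk h)
    have h2 : e.symm ⟨B h, LinearMap.mem_range_self _ h⟩ = Submodule.Quotient.mk h := by
      rw [LinearEquiv.symm_apply_eq, h1]
    simp only [hf₁, LinearMap.comp_apply, LinearEquiv.coe_coe, h2, hf₀, Submodule.liftQ_apply]
    rfl
  have hf₁norm : ∀ y : N, ‖f₁ y‖ ≤ 1 * ‖y‖ := by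
    rintro ⟨y, hy⟩
    obtain ⟨h, rfl⟩ := hy
    rw [one_mul]
    calc ‖f₁ ⟨B h, LinearMap.mem_range_self _ h⟩‖ = ‖A h‖ := by rw [hf₁B]
      _ ≤ ‖B h‖ := hAB h
      _ = ‖(⟨B h, LinearMap.mem_range_self _ h⟩ : N)‖ := rfl
  set f : N →L[ℂ] K := f₁.mkContinuous 1 hf₁norm with hf
  have hfnorm : ‖f‖ ≤ 1 := f₁.mkContinuous_norm_le zero_le_one hf₁norm
  set M : Submodule ℂ H := N.topologicalClosure with hM
  haveI : CompleteSpace M := N.isClosed_topologicalClosure.completeSpace_coe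
  set ι : N →ₗ[ℂ] M := Submodule.inclusion N.le_topologicalClosure with hι
  have hιval : ∀ x : N, ((ι x : M) : H) = (x : H) := fun x => rfl
  set e2 : N →L[ℂ] M := ι.mkContinuous 1 (fun x => by
    rw [one_mul]
    show ‖((ι x : M) : H)‖ ≤ ‖(x : H)‖
    rw [hιval]) with he2
  have he2val : ∀ x : N, ((e2 x : M) : H) = (x : H) := fun x => rfl
  have hisom : Isometry e2 := Isometry.of_dist_eq fun x y => by
    rw [Subtype.dist_eq, Subtype.dist_eq]
    show dist ((e2 x : M) : H) ((e2 y : M) : H) = _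
    rw [he2val, he2val]
  have h_dense : DenseRange e2 := by
    intro m
    rw [Metric.mem_closure_iff]
    intro ε hε
    have hm : (m : H) ∈ closure (N : Set H) := m.2
    rw [Metric.mem_closure_iff] at hm
    obtain ⟨n, hn, hdist⟩ := hm ε hε
    exact ⟨e2 ⟨n, hn⟩, ⟨⟨n, hn⟩, rfl⟩, by
      rw [Subtype.dist_eq]
      show dist (m : H) ((e2 ⟨n, hn⟩ : M) : H) < ε
      rw [he2val]
      exact hdist⟩
  set X0 : M →L[ℂ] K := f.extend e2 with hX0
  have hX0norm : ‖X0‖ ≤ 1 := by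
    have hb : ∀ x : N, ‖x‖ ≤ (1 : NNReal) * ‖e2 x‖ := fun x => by
      rw [NNReal.coe_one, one_mul]
      show ‖(x : H)‖ ≤ ‖((e2 x : M) : H)‖
      rw [he2val]
    have := f.opNorm_extend_le h_dense hb
    simpa using this.trans (by simpa using hfnorm)
  have hprojle : ∀ z : H, ‖Submodule.orthogonalProjectionOnto M z‖ ≤ ‖z‖ := fun z =>
    ((Submodule.orthogonalProjectionOnto M).le_opNorm z).trans
      (mul_le_of_le_one_left (norm_nonneg z) (Submodule.orthogonalProjectionOnto_norm_le M))
  refine ⟨X0.comp (Submodule.orthogonalProjectionOnto M), fun z => ?_, fun h => ?_⟩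
  · calc ‖X0 (Submodule.orthogonalProjectionOnto M z)‖ ≤ ‖X0‖ * ‖Submodule.orthogonalProjectionOnto M z‖ := le_opNorm _ _
      _ ≤ ‖z‖ := by
          have := hprojle z
          nlinarith [norm_nonneg (Submodule.orthogonalProjectionOnto M z)]
  · have hmem : B h ∈ M := N.le_topologicalClosure (LinearMap.mem_range_self _ h)
    have hproj : Submodule.orthogonalProjectionOnto M (B h) = ⟨B h, hmem⟩ := by
      exact Submodule.orthogonalProjectionOnto_mem_subspace_eq_self (⟨B h, hmem⟩ : M)
    have hincl : (⟨B h, hmem⟩ : M) = e2 ⟨B h, LinearMap.mem_range_self _ h⟩ := rfl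
    rw [comp_apply, hproj, hincl, ContinuousLinearMap.extend_eq f h_dense hisom.isUniformInducing]
    exact hf₁B h

theorem stmt8 {H1 H2 K1 K2 : Type*}
    [NormedAddCommGroup H1] [InnerProductSpace ℂ H1] [CompleteSpace H1]
    [NormedAddCommGroup H2] [InnerProductSpace ℂ H2] [CompleteSpace H2]
    [NormedAddCommGroup K1] [InnerProductSpace ℂ K1] [CompleteSpace K1]
    [NormedAddCommGroup K2] [InnerProductSpace ℂ K2] [CompleteSpace K2]
    (Q : H2 →L[ℂ] K1) (S : H2 →L[ℂ] K2) (R : H1 →L[ℂ] K2)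
    (hcol : ∀ h2 : H2, ‖Q h2‖ ^ 2 + ‖S h2‖ ^ 2 ≤ ‖h2‖ ^ 2)
    (hrow : ∀ (h1 : H1) (h2 : H2), ‖R h1 + S h2‖ ^ 2 ≤ ‖h1‖ ^ 2 + ‖h2‖ ^ 2) :
    ∃ P : H1 →L[ℂ] K1, ∀ (h1 : H1) (h2 : H2),
      ‖P h1 + Q h2‖ ^ 2 + ‖R h1 + S h2‖ ^ 2 ≤ ‖h1‖ ^ 2 + ‖h2‖ ^ 2 := by
  set Sd : K2 →L[ℂ] H2 := ContinuousLinearMap.adjoint S with hSdDef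
  set Rd : K2 →L[ℂ] H1 := ContinuousLinearMap.adjoint R with hRdDef
  set a : H2 →L[ℂ] H2 := 1 - Sd ∘L S with haDef
  set b : K2 →L[ℂ] K2 := 1 - S ∘L Sd with hbDef
  have ha : IsSelfAdjoint a := by
    rw [ContinuousLinearMap.isSelfAdjoint_iff', map_sub, adjoint_comp, hSdDef, adjoint_adjoint]
    rw [show ((1 : H2 →L[ℂ] H2)) = ContinuousLinearMap.id ℂ H2 from rfl, adjoint_id]
    rfl
  have hb : IsSelfAdjoint b := by
    rw [ContinuousLinearMap.isSelfAdjoint_iff', map_sub, adjoint_comp, hSdDef, adjoint_adjoint]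
    rw [show ((1 : K2 →L[ℂ] K2)) = ContinuousLinearMap.id ℂ K2 from rfl, adjoint_id]
    rfl
  -- inner product computations for a and b
  have hax : ∀ x : H2, re ⟪a x, x⟫ = ‖x‖ ^ 2 - ‖S x‖ ^ 2 := by
    intro x
    have h1 : a x = x - Sd (S x) := by simp [haDef]
    rw [h1, inner_sub_left, map_sub, hSdDef, ContinuousLinearMap.adjoint_inner_left,
      inner_self_eq_norm_sq, inner_self_eq_norm_sq]
  have hbx : ∀ k : K2, re ⟪b k, k⟫ = ‖k‖ ^ 2 - ‖Sd k‖ ^ 2 := by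
    intro k
    have h1 : b k = k - S (Sd k) := by simp [hbDef]
    rw [h1, inner_sub_left, map_sub]
    have h2 : ⟪S (Sd k), k⟫ = ⟪Sd k, Sd k⟫ := by
      rw [hSdDef, ← ContinuousLinearMap.adjoint_inner_right]
    rw [h2, inner_self_eq_norm_sq, inner_self_eq_norm_sq]
  have hS1 : ∀ h2 : H2, ‖S h2‖ ^ 2 ≤ ‖h2‖ ^ 2 := by
    intro h2
    have := hcol h2
    nlinarith [sq_nonneg ‖Q h2‖]
  have hSd_bound : ∀ k : K2, ‖Rd k‖ ^ 2 + ‖Sd k‖ ^ 2 ≤ ‖k‖ ^ 2 := by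
    intro k
    set u : K2 := R (Rd k) + S (Sd k) with hu
    set c : ℝ := ‖Rd k‖ ^ 2 + ‖Sd k‖ ^ 2 with hc
    have hc0 : 0 ≤ c := by positivity
    have hre : re ⟪u, k⟫ = c := by
      rw [hu, inner_add_left, map_add]
      have h1 : ⟪R (Rd k), k⟫ = ⟪Rd k, Rd k⟫ := by
        rw [hRdDef, ← ContinuousLinearMap.adjoint_inner_right]
      have h2 : ⟪S (Sd k), k⟫ = ⟪Sd k, Sd k⟫ := by
        rw [hSdDef, ← ContinuousLinearMap.adjoint_inner_right]
      rw [h1, h2, inner_self_eq_norm_sq, inner_self_eq_norm_sq]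
    have hun : ‖u‖ ^ 2 ≤ c := hrow (Rd k) (Sd k)
    have hle : c ≤ ‖u‖ * ‖k‖ := by
      rw [← hre]; exact re_inner_le_norm u k
    nlinarith [norm_nonneg u, norm_nonneg k, mul_le_mul hle hle hc0 (by positivity),
      mul_le_mul_of_nonneg_right hun (sq_nonneg ‖k‖)]
  have ha_pos : (0 : H2 →L[ℂ] H2) ≤ a := by
    rw [ContinuousLinearMap.nonneg_iff_isPositive]
    refine ⟨ContinuousLinearMap.isSelfAdjoint_iff_isSymmetric.mp ha, fun x => ?_⟩
    rw [ContinuousLinearMap.reApplyInnerSelf_apply, hax]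
    have := hS1 x
    linarith
  have hb_pos : (0 : K2 →L[ℂ] K2) ≤ b := by
    rw [ContinuousLinearMap.nonneg_iff_isPositive]
    refine ⟨ContinuousLinearMap.isSelfAdjoint_iff_isSymmetric.mp hb, fun k => ?_⟩
    rw [ContinuousLinearMap.reApplyInnerSelf_apply, hbx]
    have := hSd_bound k
    nlinarith [sq_nonneg ‖Rd k‖]
  set D : H2 →L[ℂ] H2 := cfc Real.sqrt a with hDdef
  set E : K2 →L[ℂ] K2 := cfc Real.sqrt b with hEdef
  have hDsa : IsSelfAdjoint D := cfc_predicate _ a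
  have hEsa : IsSelfAdjoint E := cfc_predicate _ b
  have hD2 : D * D = a := by
    rw [hDdef, ← cfc_mul _ _ a (by fun_prop) (by fun_prop)]
    have h1 : cfc (fun x => Real.sqrt x * Real.sqrt x) a = cfc (fun x : ℝ => x) a :=
      cfc_congr fun x hx => Real.mul_self_sqrt (spectrum_nonneg_of_nonneg ha_pos hx)
    rw [h1, cfc_id' ℝ a]
  have hE2 : E * E = b := by
    rw [hEdef, ← cfc_mul _ _ b (by fun_prop) (by fun_prop)]
    have h1 : cfc (fun x => Real.sqrt x * Real.sqrt x) b = cfc (fun x : ℝ => x) b :=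
      cfc_congr fun x hx => Real.mul_self_sqrt (spectrum_nonneg_of_nonneg hb_pos hx)
    rw [h1, cfc_id' ℝ b]
  have hDsym := ContinuousLinearMap.isSelfAdjoint_iff_isSymmetric.mp hDsa
  have hEsym := ContinuousLinearMap.isSelfAdjoint_iff_isSymmetric.mp hEsa
  have hDx : ∀ x : H2, ‖D x‖ ^ 2 = ‖x‖ ^ 2 - ‖S x‖ ^ 2 := by
    intro x
    have h1 : ⟪D x, D x⟫ = ⟪x, D (D x)⟫ := hDsym x (D x)
    have h2 : D (D x) = a x := by rw [← ContinuousLinearMap.mul_apply, hD2]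
    calc ‖D x‖ ^ 2 = re ⟪D x, D x⟫ := (inner_self_eq_norm_sq _).symm
      _ = re ⟪x, a x⟫ := by rw [h1, h2]
      _ = re ⟪a x, x⟫ := inner_re_symm _ _
      _ = ‖x‖ ^ 2 - ‖S x‖ ^ 2 := hax x
  have hEx : ∀ k : K2, ‖E k‖ ^ 2 = ‖k‖ ^ 2 - ‖Sd k‖ ^ 2 := by
    intro k
    have h1 : ⟪E k, E k⟫ = ⟪k, E (E k)⟫ := hEsym k (E k)
    have h2 : E (E k) = b k := by rw [← ContinuousLinearMap.mul_apply, hE2]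
    calc ‖E k‖ ^ 2 = re ⟪E k, E k⟫ := (inner_self_eq_norm_sq _).symm
      _ = re ⟪k, b k⟫ := by rw [h1, h2]
      _ = re ⟪b k, k⟫ := inner_re_symm _ _
      _ = ‖k‖ ^ 2 - ‖Sd k‖ ^ 2 := hbx k
  have hQD : ∀ h2 : H2, ‖Q h2‖ ≤ ‖D h2‖ := by
    intro h2
    rw [← Real.sqrt_sq (norm_nonneg (Q h2)), ← Real.sqrt_sq (norm_nonneg (D h2))]
    exact Real.sqrt_le_sqrt (by have := hcol h2; have := hDx h2; linarith)
  obtain ⟨X, hX1, hX2⟩ := aux_factor Q D hQD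
  have hRdE : ∀ k : K2, ‖Rd k‖ ≤ ‖E k‖ := by
    intro k
    rw [← Real.sqrt_sq (norm_nonneg (Rd k)), ← Real.sqrt_sq (norm_nonneg (E k))]
    exact Real.sqrt_le_sqrt (by have := hSd_bound k; have := hEx k; linarith)
  obtain ⟨X', hX'1, hX'2⟩ := aux_factor Rd E hRdE
  set Y : H1 →L[ℂ] K2 := ContinuousLinearMap.adjoint X' with hYdef
  have hYnorm : ∀ h1 : H1, ‖Y h1‖ ≤ ‖h1‖ := by
    intro h1
    have hX'op : ‖X'‖ ≤ 1 :=
      opNorm_le_bound _ zero_le_one fun z => by rw [one_mul]; exact hX'1 z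
    have hYop : ‖Y‖ ≤ 1 := by
      rw [hYdef]
      rw [ContinuousLinearMap.adjoint.norm_map X']
      exact hX'op
    calc ‖Y h1‖ ≤ ‖Y‖ * ‖h1‖ := le_opNorm _ _
      _ ≤ 1 * ‖h1‖ := mul_le_mul_of_nonneg_right hYop (norm_nonneg _)
      _ = ‖h1‖ := one_mul _
  have hEY : E ∘L Y = R := by
    have hcomp : X' ∘L E = Rd := by ext k; exact hX'2 k
    have h1 := congrArg (fun T => ContinuousLinearMap.adjoint T) hcomp
    simp only [adjoint_comp] at h1
    rw [ContinuousLinearMap.isSelfAdjoint_iff'.mp hEsa] at h1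
    rw [hRdDef, adjoint_adjoint] at h1
    rw [hYdef]
    exact h1
  have hint : ∀ k : K2, Sd (E k) = D (Sd k) := by
    refine aux_intertwine Sd b a hb ha fun k => ?_
    simp [haDef, hbDef]
  have cross : ∀ (y : K2) (h : H2), re ⟪E y, S h⟫ = re ⟪D h, Sd y⟫ := by
    intro y h
    have h1 : ⟪Sd (E y), h⟫ = ⟪E y, S h⟫ := by
      rw [hSdDef, ContinuousLinearMap.adjoint_inner_left]
    have h2 : ⟪D (Sd y), h⟫ = ⟪Sd y, D h⟫ := hDsym (Sd y) h
    rw [← h1, hint y, h2, inner_re_symm]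
  refine ⟨-(X ∘L (Sd ∘L Y)), fun h1 h2 => ?_⟩
  set y : K2 := Y h1 with hy
  have hPQ : (-(X ∘L (Sd ∘L Y))) h1 + Q h2 = X (D h2 - Sd y) := by
    rw [map_sub, hX2]
    simp only [neg_apply, comp_apply, hy]
    abel
  have hRE : R h1 = E y := by rw [← hEY]; rfl
  have step1 : ‖(-(X ∘L (Sd ∘L Y))) h1 + Q h2‖ ^ 2 ≤ ‖D h2 - Sd y‖ ^ 2 := by
    rw [hPQ]
    exact pow_le_pow_left₀ (norm_nonneg _) (hX1 _) 2
  have e1 : ‖D h2 - Sd y‖ ^ 2 = ‖D h2‖ ^ 2 - 2 * re ⟪D h2, Sd y⟫ + ‖Sd y‖ ^ 2 :=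
    norm_sub_sq _ _
  have e2 : ‖E y + S h2‖ ^ 2 = ‖E y‖ ^ 2 + 2 * re ⟪E y, S h2⟫ + ‖S h2‖ ^ 2 :=
    norm_add_sq _ _
  have hy2 : ‖y‖ ^ 2 ≤ ‖h1‖ ^ 2 := pow_le_pow_left₀ (norm_nonneg _) (hYnorm h1) 2
  have hDh := hDx h2
  have hEy := hEx y
  have hcr := cross y h2
  rw [hRE]
  linarith [step1]
end

section
/- Let x_1, x_2, x_3 ∈ ℂ with x_1 ≠ 0, |x_2| ≤ |x_1|, max{|x_1|/3, |x_2|/3} + |x_3| ≤ 1, and 3 − |x_1| − 3|x_3|² ≠ 0. Define l = x_1·x_2·(3 − |x_1|)/(3|x_1|·(3 − |x_1| − 3|x_3|²)) and ψ(λ) = (λ·x_1/(1 + λ·conj(x_3)·l), λ·x_2/(1 + λ·conj(x_3)·l), λ·(x_3 + λ·l)/(1 + λ·conj(x_3)·l)) for λ ∈ 𝔻. Then ψ is analytic on 𝔻 (in particular 1 + λ·conj(x_3)·l ≠ 0 for all λ ∈ 𝔻), ψ(0) = (0,0,0), and ψ'(0) = (x_1, x_2, x_3). -/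
open Complex Metric

theorem stmt9 (x1 x2 x3 : ℂ) (hx1 : x1 ≠ 0)
    (h12 : ‖x2‖ ≤ ‖x1‖)
    (hmax : max (‖x1‖ / 3) (‖x2‖ / 3) + ‖x3‖ ≤ 1)
    (hden : 3 - ‖x1‖ - 3 * (‖x3‖) ^ 2 ≠ 0)
    (l : ℂ)
    (hl : l = x1 * x2 * ((3 - ‖x1‖ : ℝ) : ℂ) /
      ((3 * ‖x1‖ * (3 - ‖x1‖ - 3 * (‖x3‖) ^ 2) : ℝ) : ℂ))
    (ψ1 ψ2 ψ3 : ℂ → ℂ)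
    (hψ1 : ∀ z : ℂ, ψ1 z = z * x1 / (1 + z * (starRingEnd ℂ) x3 * l))
    (hψ2 : ∀ z : ℂ, ψ2 z = z * x2 / (1 + z * (starRingEnd ℂ) x3 * l))
    (hψ3 : ∀ z : ℂ, ψ3 z = z * (x3 + z * l) / (1 + z * (starRingEnd ℂ) x3 * l)) :
    (∀ z ∈ ball (0 : ℂ) 1, 1 + z * (starRingEnd ℂ) x3 * l ≠ 0) ∧
    DifferentiableOn ℂ ψ1 (ball (0 : ℂ) 1) ∧
    DifferentiableOn ℂ ψ2 (ball (0 : ℂ) 1) ∧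
    DifferentiableOn ℂ ψ3 (ball (0 : ℂ) 1) ∧
    ψ1 0 = 0 ∧ ψ2 0 = 0 ∧ ψ3 0 = 0 ∧
    deriv ψ1 0 = x1 ∧ deriv ψ2 0 = x2 ∧ deriv ψ3 0 = x3 := by
  set a := ‖x1‖ with ha
  set b := ‖x2‖ with hb
  set t := ‖x3‖ with ht
  have ha0 : 0 < a := norm_pos_iff.mpr hx1
  have hb0 : 0 ≤ b := norm_nonneg _
  have ht0 : 0 ≤ t := norm_nonneg _
  have hat : a / 3 + t ≤ 1 := le_trans (by gcongr; exact le_max_left _ _) hmax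
  have hat' : a + 3 * t ≤ 3 := by linarith
  have ht1 : t ≤ 1 := by linarith
  have hD0 : 0 ≤ 3 - a - 3 * t ^ 2 := by nlinarith
  have hD : 0 < 3 - a - 3 * t ^ 2 := lt_of_le_of_ne hD0 (Ne.symm hden)
  -- |l|
  have habsl : ‖l‖ = a * b * (3 - a) / (3 * a * (3 - a - 3 * t ^ 2)) := by
    rw [hl, norm_div, norm_mul, norm_mul, Complex.norm_real, Complex.norm_real,
      Real.norm_eq_abs, Real.norm_eq_abs,
      _root_.abs_of_nonneg (by linarith : (0:ℝ) ≤ 3 - a),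
      _root_.abs_of_pos (by positivity : (0:ℝ) < 3 * a * (3 - a - 3 * t ^ 2))]
  have hkey : t * ‖l‖ ≤ 1 := by
    rw [habsl]
    rw [mul_div_assoc', div_le_one (by positivity)]
    have p1 : 0 ≤ t * (3 - a) * (a - b) :=
      mul_nonneg (mul_nonneg ht0 (by linarith)) (by linarith)
    have p2 : 0 ≤ (3 - a - 3 * t) * t := mul_nonneg (by linarith) ht0
    have p3 : 0 ≤ (3 - 3 * t - t * a) * (3 - a) := by
      have : t * a ≤ a := by nlinarith
      exact mul_nonneg (by linarith) (by linarith)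
    have hstep : t * b * (3 - a) ≤ 3 * (3 - a - 3 * t ^ 2) := by nlinarith [p1, p2, p3]
    calc t * (a * b * (3 - a)) = a * (t * b * (3 - a)) := by ring
      _ ≤ a * (3 * (3 - a - 3 * t ^ 2)) := by gcongr
      _ = 3 * a * (3 - a - 3 * t ^ 2) := by ring
  set c := (starRingEnd ℂ) x3 * l with hc
  have habsc : ‖c‖ ≤ 1 := by
    rw [hc, norm_mul, Complex.norm_conj]; exact hkey
  have hne : ∀ z ∈ ball (0 : ℂ) 1, 1 + z * (starRingEnd ℂ) x3 * l ≠ 0 := by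
    intro z hz h0
    rw [mem_ball, dist_zero_right] at hz
    have h1 : ‖z * (starRingEnd ℂ) x3 * l‖ < 1 := by
      rw [mul_assoc, norm_mul]
      calc ‖z‖ * ‖(starRingEnd ℂ) x3 * l‖
          ≤ ‖z‖ * 1 := by gcongr
        _ < 1 := by rw [mul_one]; exact hz
    have : z * (starRingEnd ℂ) x3 * l = -1 := by linear_combination h0
    rw [this] at h1; simp at h1
  have hne' : ∀ z ∈ ball (0 : ℂ) 1, 1 + z * c ≠ 0 := by
    intro z hz; rw [hc, ← mul_assoc]; exact hne z hz
  have h0mem : (0 : ℂ) ∈ ball (0 : ℂ) 1 := by simp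
  have hden0 : 1 + (0 : ℂ) * c ≠ 0 := hne' 0 h0mem
  have hdg : DifferentiableOn ℂ (fun z : ℂ => 1 + z * c) (ball (0 : ℂ) 1) :=
    ((differentiable_id.mul_const c).const_add 1).differentiableOn
  have hgd : HasDerivAt (fun z : ℂ => 1 + z * c) c 0 := by
    simpa using (((hasDerivAt_id (0:ℂ)).mul_const c).const_add 1)
  constructor
  · exact hne
  refine ⟨?_, ?_, ?_, ?_, ?_, ?_, ?_, ?_, ?_⟩
  · have : ψ1 = fun z => z * x1 / (1 + z * c) := by
      funext z; rw [hψ1 z, hc, ← mul_assoc]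
    rw [this]
    exact ((differentiable_id.mul_const x1).differentiableOn).div hdg hne'
  · have : ψ2 = fun z => z * x2 / (1 + z * c) := by
      funext z; rw [hψ2 z, hc, ← mul_assoc]
    rw [this]
    exact ((differentiable_id.mul_const x2).differentiableOn).div hdg hne'
  · have : ψ3 = fun z => z * (x3 + z * l) / (1 + z * c) := by
      funext z; rw [hψ3 z, hc, ← mul_assoc]
    rw [this]
    exact ((differentiable_id.mul ((differentiable_id.mul_const l).const_add
      x3)).differentiableOn).div hdg hne'
  · rw [hψ1 0]; simp
  · rw [hψ2 0]; simp
  · rw [hψ3 0]; simp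
  · have hf : HasDerivAt (fun z : ℂ => z * x1) (1 * x1) 0 := (hasDerivAt_id 0).mul_const x1
    have h : HasDerivAt (fun z => z * x1 / (1 + z * c))
        ((1 * x1 * (1 + 0 * c) - 0 * x1 * c) / (1 + 0 * c) ^ 2) 0 := hf.div hgd hden0
    have heq : ψ1 = fun z => z * x1 / (1 + z * c) := by
      funext z; rw [hψ1 z, hc, ← mul_assoc]
    rw [heq, h.deriv]; simp
  · have hf : HasDerivAt (fun z : ℂ => z * x2) (1 * x2) 0 := (hasDerivAt_id 0).mul_const x2
    have h : HasDerivAt (fun z => z * x2 / (1 + z * c))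
        ((1 * x2 * (1 + 0 * c) - 0 * x2 * c) / (1 + 0 * c) ^ 2) 0 := hf.div hgd hden0
    have heq : ψ2 = fun z => z * x2 / (1 + z * c) := by
      funext z; rw [hψ2 z, hc, ← mul_assoc]
    rw [heq, h.deriv]; simp
  · have hf : HasDerivAt (fun z : ℂ => z * (x3 + z * l))
        (1 * (x3 + 0 * l) + 0 * (1 * l)) 0 :=
      (hasDerivAt_id 0).mul (((hasDerivAt_id (0:ℂ)).mul_const l).const_add x3)
    have h : HasDerivAt (fun z => z * (x3 + z * l) / (1 + z * c))
        (((1 * (x3 + 0 * l) + 0 * (1 * l)) * (1 + 0 * c) - 0 * (x3 + 0 * l) * c)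
          / (1 + 0 * c) ^ 2) 0 := hf.div hgd hden0
    have heq : ψ3 = fun z => z * (x3 + z * l) / (1 + z * c) := by
      funext z; rw [hψ3 z, hc, ← mul_assoc]
    rw [heq, h.deriv]; simp
end

section
/- For n even and y = (y_1,…,y_{n-1},q) ∈ ℂ^n: y lies in G̃_n if and only if the point ŷ ∈ ℂ^{n+1} lies in G̃_{n+1}, where ŷ has last coordinate q, ŷ_j = ((n+1)/(n+1−j))·y_j and ŷ_{n+1−j} = ((n+1)/(n+1−j))·y_{n−j} for 1 ≤ j ≤ n/2. -/
open Complex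

noncomputable def cC (n j : ℕ) : ℂ := ((n + 1 : ℕ) : ℂ) / ((n + 1 - j : ℕ) : ℂ)

lemma cC_ne (n j : ℕ) (hj : j ≤ n) : cC n j ≠ 0 := by
  apply div_ne_zero
  · exact_mod_cast (by omega : (n:ℕ) + 1 ≠ 0)
  · exact_mod_cast (by omega : n + 1 - j ≠ 0)

lemma conj_cC (n j : ℕ) : (starRingEnd ℂ) (cC n j) = cC n j := by
  simp [cC, map_div₀]

lemma abs_cC (n j : ℕ) : ‖cC n j‖ = ((n + 1 : ℕ) : ℝ) / ((n + 1 - j : ℕ) : ℝ) := by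
  rw [show cC n j = ((n + 1 : ℕ) : ℂ) / ((n + 1 - j : ℕ) : ℂ) from rfl, norm_div,
    Complex.norm_natCast, Complex.norm_natCast]

lemma cC_pos (n j : ℕ) (hj : j ≤ n) : (0:ℝ) < ((n + 1 : ℕ) : ℝ) / ((n + 1 - j : ℕ) : ℝ) := by
  apply div_pos <;> exact_mod_cast (by omega : 0 < _)

lemma key (n j : ℕ) (hj : j ≤ n) :
    ((n + 1 : ℕ) : ℝ) / ((n + 1 - j : ℕ) : ℝ) * (n.choose j : ℝ) = ((n + 1).choose j : ℝ) := by
  have h0 : (0:ℝ) < ((n + 1 - j : ℕ) : ℝ) := by exact_mod_cast (by omega : 0 < n + 1 - j)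
  have hnat := Nat.choose_mul_succ_eq n j
  have : ((n.choose j * (n+1) : ℕ) : ℝ) = (((n + 1).choose j * (n + 1 - j) : ℕ) : ℝ) := by
    exact_mod_cast congrArg (fun k : ℕ => (k:ℝ)) hnat
  push_cast at this
  field_simp
  push_cast at this ⊢
  linarith [this]

lemma bound_fwd (n j : ℕ) (hj : j ≤ n) {S : ℝ} (hS : S < n.choose j) :
    ((n + 1 : ℕ) : ℝ) / ((n + 1 - j : ℕ) : ℝ) * S < ((n + 1).choose j : ℝ) := by
  rw [← key n j hj]
  exact mul_lt_mul_of_pos_left hS (cC_pos n j hj)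

lemma bound_rev (n j : ℕ) (hj : j ≤ n) {S : ℝ} (hS : S < ((n + 1).choose j : ℝ)) :
    S / (((n + 1 : ℕ) : ℝ) / ((n + 1 - j : ℕ) : ℝ)) < (n.choose j : ℝ) := by
  rw [div_lt_iff₀ (cC_pos n j hj)]
  calc S < ((n + 1).choose j : ℝ) := hS
    _ = _ := by rw [← key n j hj]; ring


/-- Membership in the extended symmetrized polydisc `G̃_m`, with coordinates
`y 1, …, y (m-1)` and last coordinate `q`. -/
def inGtilde (m : ℕ) (y : ℕ → ℂ) (q : ℂ) : Prop :=
  ‖q‖ < 1 ∧ ∃ β : ℕ → ℂ, ∀ j, 1 ≤ j → j ≤ m - 1 →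
    y j = β j + (starRingEnd ℂ) (β (m - j)) * q ∧
    ‖β j‖ + ‖β (m - j)‖ < (m.choose j : ℝ)

theorem stmt11 (n : ℕ) (hn : 2 ≤ n) (hne : Even n) (y yhat : ℕ → ℂ) (q : ℂ)
    (h1 : ∀ j, 1 ≤ j → j ≤ n / 2 →
      yhat j = (((n + 1 : ℕ) : ℂ) / ((n + 1 - j : ℕ) : ℂ)) * y j)
    (h2 : ∀ j, 1 ≤ j → j ≤ n / 2 →
      yhat (n + 1 - j) = (((n + 1 : ℕ) : ℂ) / ((n + 1 - j : ℕ) : ℂ)) * y (n - j)) :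
    inGtilde n y q ↔ inGtilde (n + 1) yhat q := by
  obtain ⟨m, hm⟩ := hne
  unfold inGtilde
  constructor
  · rintro ⟨hq, β, hβ⟩
    refine ⟨hq, fun j => if j ≤ n / 2 then cC n j * β j else cC n (n + 1 - j) * β (j - 1), ?_⟩
    intro j hj1 hj2
    replace hj2 : j ≤ n := by omega
    by_cases hc : j ≤ n / 2
    · have e1 : ¬ (n + 1 - j ≤ n / 2) := by omega
      have e3 : n + 1 - j - 1 = n - j := by omega
      have e2 : n + 1 - (n + 1 - j) = j := by omega
      obtain ⟨hyeq, hybd⟩ := hβ j hj1 (by omega)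
      have hy1 : yhat j = cC n j * y j := h1 j hj1 hc
      simp only [if_pos hc, if_neg e1, e2, e3]
      constructor
      · rw [hy1, hyeq, map_mul, conj_cC]; ring
      · rw [norm_mul, norm_mul, abs_cC, ← mul_add]
        exact bound_fwd n j hj2 hybd
    · have e1 : n + 1 - j ≤ n / 2 := by omega
      have e4 : n - (j - 1) = n + 1 - j := by omega
      obtain ⟨hyeq, hybd⟩ := hβ (j - 1) (by omega) (by omega)
      rw [e4] at hyeq hybd
      have hy2 : yhat (n + 1 - (n + 1 - j)) = cC n (n + 1 - j) * y (n - (n + 1 - j)) :=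
        h2 (n + 1 - j) (by omega) e1
      rw [show n + 1 - (n + 1 - j) = j by omega, show n - (n + 1 - j) = j - 1 by omega] at hy2
      simp only [if_neg hc, if_pos e1]
      constructor
      · rw [hy2, hyeq, map_mul, conj_cC]; ring
      · have hs1 : (n + 1).choose (n + 1 - j) = (n + 1).choose j :=
          by rw [← Nat.choose_symm (show j ≤ n + 1 by omega)]
        have hs2 : n.choose (j - 1) = n.choose (n + 1 - j) := by
          rw [← Nat.choose_symm (show n + 1 - j ≤ n by omega),
            show n - (n + 1 - j) = j - 1 by omega]
        rw [norm_mul, norm_mul, abs_cC, ← mul_add, ← hs1]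
        exact bound_fwd n (n + 1 - j) (by omega) (by rw [← hs2]; exact hybd)
  · rintro ⟨hq, γ, hγ⟩
    refine ⟨hq, fun j => if j < n / 2 then γ j / cC n j
      else if j = n / 2 then (γ j + γ (j + 1)) / (2 * cC n j)
      else γ (j + 1) / cC n (n - j), ?_⟩
    intro j hj1 hj2
    rcases lt_trichotomy j (n / 2) with hc | hc | hc
    · -- j < n/2
      have e1 : ¬ (n - j < n / 2) := by omega
      have e2 : ¬ (n - j = n / 2) := by omega
      have e3 : n - j + 1 = n + 1 - j := by omega
      have e4 : n - (n - j) = j := by omega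
      obtain ⟨hyeq, hybd⟩ := hγ j hj1 (by omega)
      have hy1 : yhat j = cC n j * y j := h1 j hj1 (by omega)
      have hrel : cC n j * y j = γ j + (starRingEnd ℂ) (γ (n + 1 - j)) * q := by
        rw [← hy1]; exact hyeq
      have hne0 : cC n j ≠ 0 := cC_ne n j (by omega)
      simp only [if_pos hc, if_neg e1, if_neg e2, e3, e4]
      constructor
      · rw [map_div₀, conj_cC]
        field_simp
        linear_combination hrel
      · rw [norm_div, norm_div, abs_cC, ← add_div]
        exact bound_rev n j (by omega) hybd
    · -- j = n/2
      have e0 : n - j = j := by omega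
      rw [e0]
      have e2 : n + 1 - j = j + 1 := by omega
      have e5 : n + 1 - (j + 1) = j := by omega
      obtain ⟨hyeqA, hybd⟩ := hγ j hj1 (by omega)
      obtain ⟨hyeqB, _⟩ := hγ (j + 1) (by omega) (by omega)
      rw [e2] at hyeqA hybd
      rw [e5] at hyeqB
      have hy1 : yhat j = cC n j * y j := h1 j hj1 (by omega)
      have hy2 : yhat (n + 1 - j) = cC n j * y (n - j) := h2 j hj1 (by omega)
      rw [e2, e0] at hy2
      have A : cC n j * y j = γ j + (starRingEnd ℂ) (γ (j + 1)) * q := by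
        rw [← hy1]; exact hyeqA
      have B : cC n j * y j = γ (j + 1) + (starRingEnd ℂ) (γ j) * q := by
        rw [← hy2]; exact hyeqB
      have hne0 : cC n j ≠ 0 := cC_ne n j (by omega)
      simp only [if_neg (lt_irrefl (n / 2)), if_pos rfl, if_neg (show ¬ j < n / 2 by omega),
        if_pos hc]
      constructor
      · rw [map_div₀, map_mul, map_add, conj_cC, Complex.conj_ofNat]
        field_simp
        linear_combination A + B
      · rw [norm_div, norm_mul, Complex.norm_two, abs_cC]
        set t := ‖γ j + γ (j + 1)‖ with ht
        set c := ((n + 1 : ℕ) : ℝ) / ((n + 1 - j : ℕ) : ℝ) with hcq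
        have hcpos : (0:ℝ) < c := cC_pos n j (by omega)
        have hc0 : c ≠ 0 := ne_of_gt hcpos
        have htle : t ≤ ‖γ j‖ + ‖γ (j + 1)‖ := norm_add_le _ _
        have hb := bound_rev n j (by omega) hybd
        have h3 : t / (2 * c) + t / (2 * c) = t / c := by field_simp; ring
        calc t / (2 * c) + t / (2 * c) = t / c := h3
          _ ≤ (‖γ j‖ + ‖γ (j + 1)‖) / c := by gcongr
          _ < (n.choose j : ℝ) := hb
    · -- j > n/2
      have e1 : n - j < n / 2 := by omega
      have e2 : n + 1 - (n - j) = j + 1 := by omega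
      have e3 : n + 1 - (j + 1) = n - j := by omega
      obtain ⟨_, hybd⟩ := hγ (n - j) (by omega) (by omega)
      rw [e2] at hybd
      obtain ⟨hyeq, _⟩ := hγ (j + 1) (by omega) (by omega)
      rw [e3] at hyeq
      have hy2 : yhat (n + 1 - (n - j)) = cC n (n - j) * y (n - (n - j)) :=
        h2 (n - j) (by omega) (by omega)
      rw [e2, show n - (n - j) = j by omega] at hy2
      have hrel : cC n (n - j) * y j = γ (j + 1) + (starRingEnd ℂ) (γ (n - j)) * q := by
        rw [← hy2]; exact hyeq
      have hne0 : cC n (n - j) ≠ 0 := cC_ne n (n - j) (by omega)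
      simp only [if_neg (show ¬ j < n / 2 by omega), if_neg (show ¬ j = n / 2 by omega),
        if_pos e1]
      constructor
      · rw [map_div₀, conj_cC]
        field_simp
        linear_combination hrel
      · have hs : n.choose j = n.choose (n - j) := by
          rw [← Nat.choose_symm (show n - j ≤ n by omega), show n - (n - j) = j by omega]
        rw [norm_div, norm_div, abs_cC, ← add_div, hs,
          add_comm ‖γ (j + 1)‖]
        exact bound_rev n (n - j) (by omega) hybd
end

section
/- For n odd and y = (y_1,…,y_{n-1},q) ∈ G̃_n, the point y* ∈ ℂ^{n+1} lies in G̃_{n+1}, where y* has last coordinate q, middle coordinate (position (n+1)/2) equal to y_{(n−1)/2} + y_{(n+1)/2}, and y*_j = ((n+1)/(n+1−j))·y_j, y*_{n+1−j} = ((n+1)/(n+1−j))·y_{n−j} for 1 ≤ j ≤ (n−1)/2. -/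
open Complex

/-- `(2k+2)/(2k+2-j) * C(2k+1,j) = C(2k+2,j)` over ℝ. -/
lemma key1 (k j : ℕ) (hj : j ≤ 2*k+1) :
    ((2*k+1+1 : ℕ) : ℝ) / ((2*k+1+1-j : ℕ) : ℝ) * ((2*k+1).choose j : ℝ)
      = ((2*k+1+1).choose j : ℝ) := by
  have h := Nat.choose_mul_succ_eq (2*k+1) j
  have hpos : (0:ℝ) < ((2*k+1+1-j : ℕ) : ℝ) := by
    exact_mod_cast Nat.pos_of_ne_zero (by omega)
  rw [div_mul_eq_mul_div, div_eq_iff hpos.ne']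
  have h2 : (2*k+1+1) * (2*k+1).choose j = (2*k+1+1).choose j * (2*k+1+1-j) := by
    rw [Nat.mul_comm]; exact h
  exact_mod_cast h2

/-- `(2k+2)/j * C(2k+1,j-1) = C(2k+2,j)` over ℝ, for `1 ≤ j`. -/
lemma key2 (k j : ℕ) (hj : 1 ≤ j) :
    ((2*k+1+1 : ℕ) : ℝ) / (j : ℝ) * ((2*k+1).choose (j-1) : ℝ)
      = ((2*k+1+1).choose j : ℝ) := by
  have h : (2*k+1+1) * (2*k+1).choose (j-1) = (2*k+1+1).choose j * j := by
    have h0 := Nat.add_one_mul_choose_eq (2*k+1) (j-1)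
    simpa [Nat.succ_eq_add_one, show j-1+1 = j from by omega] using h0
  have hpos : (0:ℝ) < (j : ℝ) := by exact_mod_cast hj
  rw [div_mul_eq_mul_div, div_eq_iff hpos.ne']
  exact_mod_cast h

theorem stmt12 (n : ℕ) (hn : 3 ≤ n) (hno : Odd n) (y ystar : ℕ → ℂ) (q : ℂ)
    (hy : inGtilde n y q)
    (hmid : ystar ((n + 1) / 2) = y ((n - 1) / 2) + y ((n + 1) / 2))
    (h1 : ∀ j, 1 ≤ j → j ≤ (n - 1) / 2 →
      ystar j = (((n + 1 : ℕ) : ℂ) / ((n + 1 - j : ℕ) : ℂ)) * y j ∧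
      ystar (n + 1 - j) = (((n + 1 : ℕ) : ℂ) / ((n + 1 - j : ℕ) : ℂ)) * y (n - j)) :
    inGtilde (n + 1) ystar q := by
  obtain ⟨k, hk⟩ := hno
  subst hk
  have hk1 : 1 ≤ k := by omega
  obtain ⟨hq, β, hβ⟩ := hy
  have e1 : (2*k+1+1)/2 = k+1 := by omega
  have e2 : (2*k+1-1)/2 = k := by omega
  rw [e1, e2] at hmid
  rw [e2] at h1
  refine ⟨hq, fun j => if j ≤ k then (((2*k+1+1 : ℕ) : ℂ) / ((2*k+1+1-j : ℕ) : ℂ)) * β j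
      else if j = k+1 then β k + β (k+1)
      else (((2*k+1+1 : ℕ) : ℂ) / ((j : ℕ) : ℂ)) * β (j-1), ?_⟩
  intro j hj1 hj2
  have hj2' : j ≤ 2*k+1 := by omega
  rcases lt_trichotomy j (k+1) with hc | hc | hc
  · -- case 1 ≤ j ≤ k
    have hjk : j ≤ k := by omega
    obtain ⟨hyj, hbj⟩ := hβ j hj1 (by omega)
    obtain ⟨hsj, hsj'⟩ := h1 j hj1 hjk
    simp only [if_pos hjk, if_neg (show ¬(2*k+1+1-j ≤ k) by omega),
      if_neg (show ¬(2*k+1+1-j = k+1) by omega)]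
    rw [show 2*k+1+1-j-1 = 2*k+1-j from by omega]
    constructor
    · rw [hsj, hyj]
      rw [map_mul, map_div₀, map_natCast, map_natCast]
      ring
    · simp only [norm_mul, norm_div, Complex.norm_natCast]
      rw [← mul_add]
      have hc1 : (0:ℝ) < ((2*k+1+1 : ℕ) : ℝ) / ((2*k+1+1-j : ℕ) : ℝ) := by
        apply div_pos
        · exact_mod_cast Nat.pos_of_ne_zero (by omega)
        · exact_mod_cast Nat.pos_of_ne_zero (by omega)
      calc ((2*k+1+1 : ℕ) : ℝ) / ((2*k+1+1-j : ℕ) : ℝ)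
            * (‖β j‖ + ‖β (2*k+1-j)‖)
          < ((2*k+1+1 : ℕ) : ℝ) / ((2*k+1+1-j : ℕ) : ℝ) * ((2*k+1).choose j : ℝ) :=
            mul_lt_mul_of_pos_left hbj hc1
        _ = ((2*k+1+1).choose j : ℝ) := key1 k j hj2'
  · -- middle case j = k+1
    subst hc
    obtain ⟨hyk, hbk⟩ := hβ k hk1 (by omega)
    obtain ⟨hyk1, _⟩ := hβ (k+1) (by omega) (by omega)
    rw [show 2*k+1-k = k+1 from by omega] at hyk hbk
    rw [show 2*k+1-(k+1) = k from by omega] at hyk1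
    simp only [show 2*k+1+1-(k+1) = k+1 from by omega,
      if_neg (show ¬(k+1 ≤ k) by omega), eq_self_iff_true, if_true]
    constructor
    · rw [hmid, hyk, hyk1, map_add]
      ring
    · have htri : ‖β k + β (k+1)‖ ≤ ‖β k‖ + ‖β (k+1)‖ :=
        norm_add_le _ _
      have hch : (2*k+1+1).choose (k+1) = (2*k+1).choose k + (2*k+1).choose k := by
        have h' := Nat.choose_succ_succ (2*k+1) k
        have hsym : (2*k+1).choose (k+1) = (2*k+1).choose k := by
          rw [show k+1 = 2*k+1-k from by omega]
          exact Nat.choose_symm (by omega)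
        rw [h', hsym]
      rw [hch]
      push_cast
      linarith
  · -- case k+2 ≤ j ≤ 2k+1
    have hj3 : k+2 ≤ j := by omega
    obtain ⟨hyj1, hbj1⟩ := hβ (j-1) (by omega) (by omega)
    obtain ⟨_, hsj'⟩ := h1 (2*k+1+1-j) (by omega) (by omega)
    rw [show 2*k+1+1-(2*k+1+1-j) = j from by omega,
      show 2*k+1-(2*k+1+1-j) = j-1 from by omega] at hsj'
    rw [show 2*k+1-(j-1) = 2*k+1+1-j from by omega] at hyj1 hbj1
    simp only [if_neg (show ¬(j ≤ k) by omega), if_neg (show ¬(j = k+1) by omega),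
      if_pos (show 2*k+1+1-j ≤ k by omega)]
    rw [show 2*k+1+1-(2*k+1+1-j) = j from by omega]
    constructor
    · rw [hsj', hyj1]
      rw [map_mul, map_div₀, map_natCast, map_natCast]
      ring
    · simp only [norm_mul, norm_div, Complex.norm_natCast]
      rw [← mul_add]
      have hc1 : (0:ℝ) < ((2*k+1+1 : ℕ) : ℝ) / ((j : ℕ) : ℝ) := by
        apply div_pos
        · exact_mod_cast Nat.pos_of_ne_zero (by omega)
        · exact_mod_cast Nat.pos_of_ne_zero (by omega)
      calc ((2*k+1+1 : ℕ) : ℝ) / ((j : ℕ) : ℝ)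
            * (‖β (j-1)‖ + ‖β (2*k+1+1-j)‖)
          < ((2*k+1+1 : ℕ) : ℝ) / ((j : ℕ) : ℝ) * ((2*k+1).choose (j-1) : ℝ) :=
            mul_lt_mul_of_pos_left hbj1 hc1
        _ = ((2*k+1+1).choose j : ℝ) := key2 k j hj1
end

section
/- For n even and y = (y_1,…,y_{n-1},q) ∈ G̃_n, the point ǎy ∈ ℂ^{n−1} lies in G̃_{n−1}, where ǎy has last coordinate q and coordinates ǎy_j = ((n−j)/n)·y_j and ǎy_{n−1−j} = ((n−j)/n)·y_{n−j} for 1 ≤ j ≤ n/2 − 1 (so the coordinate y_{n/2} is dropped). -/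
open Complex

lemma choose_key (n j : ℕ) (hn : 0 < n) :
    (((n - j : ℕ) : ℝ) / n) * (n.choose j) = ((n - 1).choose j) := by
  rw [div_mul_eq_mul_div, eq_comm, eq_div_iff (by positivity)]
  have h := Nat.choose_mul_succ_eq (n - 1) j
  have h2 : n - 1 + 1 = n := by omega
  rw [h2] at h
  have h' : ((n - 1).choose j * n : ℕ) = (n - j) * n.choose j := by
    rw [h, Nat.mul_comm]
  exact_mod_cast h'

theorem stmt13 (n : ℕ) (hn : 2 ≤ n) (hne : Even n) (y ycheck : ℕ → ℂ) (q : ℂ)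
    (hy : inGtilde n y q)
    (h1 : ∀ j, 1 ≤ j → j ≤ n / 2 - 1 →
      ycheck j = (((n - j : ℕ) : ℂ) / ((n : ℕ) : ℂ)) * y j ∧
      ycheck (n - 1 - j) = (((n - j : ℕ) : ℂ) / ((n : ℕ) : ℂ)) * y (n - j)) :
    inGtilde (n - 1) ycheck q := by
  obtain ⟨hq, β, hβ⟩ := hy
  have hn0 : 0 < n := by omega
  have hn2 : n / 2 * 2 = n := Nat.div_mul_cancel hne.two_dvd
  refine ⟨hq, fun k => if k ≤ n / 2 - 1 then (((n - k : ℕ) : ℂ) / ((n : ℕ) : ℂ)) * β k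
      else (((k + 1 : ℕ) : ℂ) / ((n : ℕ) : ℂ)) * β (k + 1), ?_⟩
  intro j hj1 hj2
  by_cases hcase : j ≤ n / 2 - 1
  · have hne2 : ¬ (n - 1 - j ≤ n / 2 - 1) := by omega
    have e1 : n - 1 - j + 1 = n - j := by omega
    simp only [if_pos hcase, if_neg hne2, e1]
    obtain ⟨hy1, hy2⟩ := hβ j hj1 (by omega)
    obtain ⟨hc1, _⟩ := h1 j hj1 hcase
    constructor
    · rw [hc1, hy1]
      simp only [map_mul, map_div₀, map_natCast]
      ring
    · rw [norm_mul, norm_mul, norm_div, Complex.norm_natCast, Complex.norm_natCast,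
        ← choose_key n j hn0, ← mul_add]
      have hpos : (0 : ℝ) < ((n - j : ℕ) : ℝ) / n := by
        have : (0 : ℝ) < ((n - j : ℕ) : ℝ) := by
          exact_mod_cast (show 0 < n - j by omega)
        positivity
      exact mul_lt_mul_of_pos_left hy2 hpos
  · set j' := n - 1 - j with hj'
    have hj'1 : 1 ≤ j' := by omega
    have hj'2 : j' ≤ n / 2 - 1 := by omega
    have e1 : n - j' = j + 1 := by omega
    have e2 : n - (j + 1) = j' := by omega
    have e3 : n - 1 - j' = j := by omega
    have e4 : n - 1 - j = j' := rfl
    simp only [e4, if_pos hj'2, if_neg hcase, e1]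
    obtain ⟨hy1, hy2⟩ := hβ (j + 1) (by omega) (by omega)
    rw [e2] at hy1 hy2
    obtain ⟨_, hc2⟩ := h1 j' hj'1 hj'2
    rw [e1, e3] at hc2
    constructor
    · rw [hc2, hy1]
      simp only [map_mul, map_div₀, map_natCast]
      ring
    · rw [norm_mul, norm_mul, norm_div, Complex.norm_natCast, Complex.norm_natCast, ← mul_add]
      have key : (((j + 1 : ℕ) : ℝ) / n) * (n.choose (j + 1)) = ((n - 1).choose j) := by
        have s1 : n.choose (j + 1) = n.choose j' := by
          rw [← e1, Nat.choose_symm (by omega)]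
        have s2 : (n - 1).choose j = (n - 1).choose j' := by
          rw [← e3, Nat.choose_symm (by omega)]
        rw [s1, s2, ← choose_key n j' hn0, ← e1]
      rw [← key]
      have hpos : (0 : ℝ) < ((j + 1 : ℕ) : ℝ) / n := by positivity
      exact mul_lt_mul_of_pos_left hy2 hpos
end

section
/- For n odd and y = (y_1,…,y_{n-1},q) ∈ G̃_n, the point ỹ ∈ ℂ^{n−1} lies in G̃_{n−1}, where ỹ has last coordinate q, middle coordinate (position (n−1)/2) equal to ((n+1)/(2n))·(y_{(n−1)/2} + y_{(n+1)/2})/2, and ỹ_j = ((n−j)/n)·y_j, ỹ_{n−1−j} = ((n−j)/n)·y_{n−j} for 1 ≤ j ≤ (n−3)/2. -/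
open Complex

lemma cast_aux (n j : ℕ) (hn : 0 < n) :
    ((n - j : ℕ) : ℝ) / (n : ℝ) * (n.choose j : ℝ) = ((n - 1).choose j : ℝ) := by
  have h := Nat.choose_mul_succ_eq (n - 1) j
  rw [Nat.sub_add_cancel hn] at h
  -- h : (n-1).choose j * n = n.choose j * (n - j)
  have h2 : (n - j) * n.choose j = (n - 1).choose j * n := by rw [mul_comm]; exact h.symm
  have hn' : (n : ℝ) ≠ 0 := by positivity
  field_simp
  exact_mod_cast h2.trans (mul_comm _ _)

theorem stmt14 (n : ℕ) (hn : 3 ≤ n) (hno : Odd n) (y ytilde : ℕ → ℂ) (q : ℂ)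
    (hy : inGtilde n y q)
    (hmid : ytilde ((n - 1) / 2) =
      (((n + 1 : ℕ) : ℂ) / ((2 * n : ℕ) : ℂ)) *
        ((y ((n - 1) / 2) + y ((n + 1) / 2)) / 2))
    (h1 : ∀ j, 1 ≤ j → j ≤ (n - 3) / 2 →
      ytilde j = (((n - j : ℕ) : ℂ) / ((n : ℕ) : ℂ)) * y j ∧
      ytilde (n - 1 - j) = (((n - j : ℕ) : ℂ) / ((n : ℕ) : ℂ)) * y (n - j)) :
    inGtilde (n - 1) ytilde q := by
  obtain ⟨habs, β, hβ⟩ := hy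
  obtain ⟨k, hk⟩ := hno
  have hk1 : 1 ≤ k := by omega
  have hn0 : 0 < n := by omega
  have hnR : (0:ℝ) < (n:ℝ) := by exact_mod_cast hn0
  refine ⟨habs, fun i => if i < k then (((n - i : ℕ) : ℂ)/((n:ℕ):ℂ)) * β i
      else if i = k then (((k + 1 : ℕ):ℂ)/(((2*n : ℕ)):ℂ)) * (β k + β (k+1))
      else (((i + 1 : ℕ):ℂ)/((n:ℕ):ℂ)) * β (i+1), ?_⟩
  intro j hj1 hj2
  have hj2' : j ≤ 2*k - 1 := by omega
  rcases lt_trichotomy j k with hjk | hjk | hjk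
  · -- case j < k
    have e1 : n - 1 - j = 2*k - j := by omega
    have hlt : ¬ (n - 1 - j < k) := by omega
    have hne : ¬ (n - 1 - j = k) := by omega
    have e2 : n - 1 - j + 1 = n - j := by omega
    simp only [if_pos hjk, if_neg hlt, if_neg hne, e2]
    obtain ⟨hy1, hb1⟩ := hβ j hj1 (by omega)
    have ht := (h1 j hj1 (by omega)).1
    constructor
    · rw [ht, hy1]
      simp only [map_mul, map_div₀, map_natCast]
      ring
    · simp only [map_mul, map_div₀, norm_mul, norm_div, Complex.norm_natCast]
      have hpos : (0:ℝ) < ((n - j : ℕ):ℝ) / (n:ℝ) := by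
        apply div_pos _ hnR
        have : 0 < n - j := by omega
        exact_mod_cast this
      calc ((n - j : ℕ):ℝ)/(n:ℝ) * ‖β j‖ + ((n - j : ℕ):ℝ)/(n:ℝ) * ‖β (n - j)‖
          = ((n - j : ℕ):ℝ)/(n:ℝ) * (‖β j‖ + ‖β (n - j)‖) := by ring
        _ < ((n - j : ℕ):ℝ)/(n:ℝ) * (n.choose j : ℝ) := by
            exact mul_lt_mul_of_pos_left hb1 hpos
        _ = ((n - 1).choose j : ℝ) := cast_aux n j hn0
  · -- case j = k
    subst hjk
    have e0 : n - 1 - j = j := by omega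
    have e1 : (n - 1) / 2 = j := by omega
    have e2 : (n + 1) / 2 = j + 1 := by omega
    have e3 : n - j = j + 1 := by omega
    have e4 : n - (j + 1) = j := by omega
    rw [e1, e2] at hmid
    simp only [e0, if_neg (lt_irrefl j), eq_self_iff_true, if_true]
    obtain ⟨hy1, hb1⟩ := hβ j hj1 (by omega)
    obtain ⟨hy2, _⟩ := hβ (j+1) (by omega) (by omega)
    rw [e3] at hy1 hb1
    rw [e4] at hy2
    constructor
    · rw [hmid, hy1, hy2]
      simp only [map_mul, map_div₀, map_natCast, map_add]
      have hnC : ((n:ℕ):ℂ) ≠ 0 := by exact_mod_cast hn0.ne'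
      have h2nC : (((2*n : ℕ)):ℂ) ≠ 0 := by
        have : 0 < 2*n := by omega
        exact_mod_cast this.ne'
      have hnk : ((n:ℕ):ℂ) = 2*(j:ℂ) + 1 := by push_cast [hk]; ring
      field_simp
      push_cast [hk]
      ring
    · simp only [map_mul, map_div₀, norm_mul, norm_div, Complex.norm_natCast]
      have htri := norm_add_le (β j) (β (j+1))
      have hchoose : ((j + 1 : ℕ):ℝ)/(n:ℝ) * (n.choose j : ℝ) = ((n - 1).choose j : ℝ) := by
        rw [← e3]; exact cast_aux n j hn0
      have hpos : (0:ℝ) < ((j + 1 : ℕ):ℝ)/(n:ℝ) := by positivity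
      have h2n : (((2*n : ℕ)):ℝ) = 2 * (n:ℝ) := by push_cast; ring
      rw [h2n]
      have hn' : (n:ℝ) ≠ 0 := hnR.ne'
      calc ((j + 1 : ℕ):ℝ)/(2*(n:ℝ)) * ‖β j + β (j+1)‖ +
            ((j + 1 : ℕ):ℝ)/(2*(n:ℝ)) * ‖β j + β (j+1)‖
          = ((j + 1 : ℕ):ℝ)/(n:ℝ) * ‖β j + β (j+1)‖ := by
            field_simp; ring
        _ ≤ ((j + 1 : ℕ):ℝ)/(n:ℝ) * (‖β j‖ + ‖β (j+1)‖) :=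
            mul_le_mul_of_nonneg_left htri hpos.le
        _ < ((j + 1 : ℕ):ℝ)/(n:ℝ) * (n.choose j : ℝ) := mul_lt_mul_of_pos_left hb1 hpos
        _ = ((n - 1).choose j : ℝ) := hchoose
  · -- case j > k
    set j' := 2*k - j with hj'
    have hj'1 : 1 ≤ j' := by omega
    have hj'k : j' < k := by omega
    have e1 : n - 1 - j' = j := by omega
    have e2 : n - j' = j + 1 := by omega
    have e3 : n - (j + 1) = j' := by omega
    have e4 : n - 1 - j = j' := by omega
    have hlt : ¬ (j < k) := by omega
    have hne : ¬ (j = k) := by omega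
    simp only [if_neg hlt, if_neg hne, e4, if_pos hj'k, e2]
    obtain ⟨hy2, _⟩ := hβ (j+1) (by omega) (by omega)
    obtain ⟨_, hb1⟩ := hβ j' hj'1 (by omega)
    rw [e3] at hy2
    rw [e2] at hb1
    have ht := (h1 j' hj'1 (by omega)).2
    rw [e1, e2] at ht
    constructor
    · rw [ht, hy2]
      simp only [map_mul, map_div₀, map_natCast]
      ring
    · simp only [map_mul, map_div₀, norm_mul, norm_div, Complex.norm_natCast]
      have hpos : (0:ℝ) < ((j + 1 : ℕ):ℝ)/(n:ℝ) := by positivity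
      have hchoose : ((j + 1 : ℕ):ℝ)/(n:ℝ) * (n.choose j' : ℝ) = ((n - 1).choose j' : ℝ) := by
        rw [← e2]; exact cast_aux n j' hn0
      have hsymm : (n - 1).choose j' = (n - 1).choose j := by
        have : j' = (n - 1) - j := by omega
        rw [this]
        exact Nat.choose_symm (by omega)
      calc ((j + 1 : ℕ):ℝ)/(n:ℝ) * ‖β (j+1)‖ + ((j + 1 : ℕ):ℝ)/(n:ℝ) * ‖β j'‖
          = ((j + 1 : ℕ):ℝ)/(n:ℝ) * (‖β j'‖ + ‖β (j+1)‖) := by ring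
        _ < ((j + 1 : ℕ):ℝ)/(n:ℝ) * (n.choose j' : ℝ) := mul_lt_mul_of_pos_left hb1 hpos
        _ = ((n - 1).choose j : ℝ) := by rw [hchoose, hsymm]
end

section
/- For n even and y = (y_1,…,y_{n-1},q) ∈ G̃_n, the point y̲ = (y_1,…,y_{n/2}, y_{n/2}, y_{n/2+1},…,y_{n-1}, q) ∈ ℂ^{n+1} (the coordinate y_{n/2} duplicated) lies in G̃_{n+1}, and the map y ↦ y̲ is a holomorphic embedding of G̃_n into G̃_{n+1}. -/
open Complex

/-- The extended symmetrized polydisc `G̃_m` as a subset of `ℂ^m`, where the point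
`z` has coordinates `y_j = z (j-1)` for `1 ≤ j ≤ m-1` and `q = z (m-1)`. -/
def GtildeF (m : ℕ) : Set (Fin m → ℂ) :=
  {z | ∃ hm : 0 < m, ‖z ⟨m - 1, by omega⟩‖ < 1 ∧
    ∃ β : ℕ → ℂ, ∀ j, ∀ _h1 : 1 ≤ j, ∀ _h2 : j ≤ m - 1,
      z ⟨j - 1, by omega⟩ = β j + (starRingEnd ℂ) (β (m - j)) * z ⟨m - 1, by omega⟩ ∧
      ‖β j‖ + ‖β (m - j)‖ < (m.choose j : ℝ)}

set_option maxHeartbeats 1000000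

theorem stmt15 (n : ℕ) (hn : 2 ≤ n) (hne : Even n)
    (F : (Fin n → ℂ) → Fin (n + 1) → ℂ)
    (hF : ∀ (z : Fin n → ℂ) (i : Fin (n + 1)),
      F z i = if h : (i : ℕ) < n / 2 then z ⟨(i : ℕ), by omega⟩
        else z ⟨(i : ℕ) - 1, by have := i.isLt; omega⟩) :
    Set.MapsTo F (GtildeF n) (GtildeF (n + 1)) ∧
    Function.Injective F ∧
    AnalyticOn ℂ F (GtildeF n) := by
  obtain ⟨r, hr⟩ := hne
  refine ⟨?_, ?_, ?_⟩
  · -- MapsTo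
    rintro z ⟨hm0, hq, β, hβ⟩
    have hqF : F z ⟨n + 1 - 1, by omega⟩ = z ⟨n - 1, by omega⟩ := by
      rw [hF]
      have hc : ¬ ((⟨n + 1 - 1, by omega⟩ : Fin (n+1)) : ℕ) < n / 2 := by simp; omega
      rw [dif_neg hc]
      congr 1
    have hm1 : 0 < n + 1 := by omega
    refine ⟨hm1, ?_, ?_⟩
    · rw [hqF]; exact hq
    refine ⟨fun j => if j ≤ n / 2 then β j else β (j - 1), fun j h1 h2 => ?_⟩
    rw [hqF]
    by_cases hj : j ≤ n / 2
    · have hj' : j ≤ n - 1 := by omega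
      have hnj : ¬ (n + 1 - j ≤ n / 2) := by omega
      obtain ⟨key1, key2⟩ := hβ j h1 hj'
      have hFj : F z ⟨j - 1, by omega⟩ = z ⟨j - 1, by omega⟩ := by
        rw [hF]
        by_cases hc : ((⟨j - 1, by omega⟩ : Fin (n+1)) : ℕ) < n / 2
        · rw [dif_pos hc]
        · rw [dif_neg hc]
          congr 1
          apply Fin.ext
          simp at hc ⊢
          omega
      have he : n + 1 - j - 1 = n - j := by omega
      refine ⟨?_, ?_⟩
      · rw [hFj]; simp only [if_pos hj, if_neg hnj, he]; exact key1
      · simp only [if_pos hj, if_neg hnj, he]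
        calc ‖β j‖ + ‖β (n - j)‖ < (n.choose j : ℝ) := key2
          _ ≤ ((n+1).choose j : ℝ) := by
              exact_mod_cast Nat.choose_le_choose j (Nat.le_succ n)
    · have hj1 : 1 ≤ j - 1 := by omega
      have hj2 : j - 1 ≤ n - 1 := by omega
      obtain ⟨key1, key2⟩ := hβ (j - 1) hj1 hj2
      have hnj : n - (j - 1) ≤ n / 2 := by omega
      have hFj : F z ⟨j - 1, by omega⟩ = z ⟨j - 1 - 1, by omega⟩ := by
        rw [hF]
        have hc : ¬ ((⟨j - 1, by omega⟩ : Fin (n+1)) : ℕ) < n / 2 := by simp; omega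
        rw [dif_neg hc]
      have heq : n + 1 - j = n - (j - 1) := by omega
      refine ⟨?_, ?_⟩
      · rw [hFj]; simp only [if_neg hj, if_pos hnj, heq]; exact key1
      · simp only [if_neg hj, if_pos hnj, heq]
        calc ‖β (j-1)‖ + ‖β (n - (j-1))‖ < (n.choose (j-1) : ℝ) := key2
          _ ≤ ((n+1).choose j : ℝ) := by
              have h : (n+1).choose j = n.choose (j-1) + n.choose j := by
                have hj' : j = (j - 1) + 1 := by omega
                rw [hj', Nat.choose_succ_succ]
                congr 1 <;> omega
              exact_mod_cast h ▸ Nat.le_add_right _ _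
  · -- Injective
    intro z w h
    funext i
    rcases lt_or_ge (i : ℕ) (n / 2) with hi | hi
    · have h2 := congrFun h ⟨i, by omega⟩
      rw [hF, hF] at h2
      have hc : ((⟨(i:ℕ), by omega⟩ : Fin (n+1)) : ℕ) < n / 2 := hi
      rw [dif_pos hc, dif_pos hc] at h2
      simpa using h2
    · have h2 := congrFun h ⟨(i:ℕ) + 1, by have := i.isLt; omega⟩
      rw [hF, hF] at h2
      have hc : ¬ ((⟨(i:ℕ) + 1, by have := i.isLt; omega⟩ : Fin (n+1)) : ℕ) < n / 2 := by
        simp; omega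
      rw [dif_neg hc, dif_neg hc] at h2
      simpa using h2
  · -- Analytic
    have hFe : F = fun z i => z (if h : (i : ℕ) < n / 2 then ⟨(i : ℕ), by omega⟩
        else ⟨(i : ℕ) - 1, by have := i.isLt; omega⟩) := by
      funext z i
      rw [hF]
      split <;> rfl
    rw [hFe]
    intro x _
    apply analyticWithinAt_pi_iff.2
    intro i
    exact ((ContinuousLinearMap.proj (R := ℂ) (φ := fun _ : Fin n => ℂ)
      (if h : (i : ℕ) < n / 2 then ⟨(i : ℕ), by omega⟩
        else ⟨(i : ℕ) - 1, by have := i.isLt; omega⟩)).analyticAt x).analyticWithinAt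
end

section
/- For n even and y = (y_1,…,y_n,q) ∈ G̃_{n+1}, the point ỹ ∈ ℂ^n lies in G̃_n, where ỹ has last coordinate q, middle coordinate (position n/2) equal to ((n/2+1)/(2(n+1)))·(y_{n/2} + y_{n/2+1}), and ỹ_j = ((n+1−j)/(n+1))·y_j, ỹ_{n−j} = ((n+1−j)/(n+1))·y_{n+1−j} for 1 ≤ j ≤ n/2 − 1. -/
open Complex

theorem stmt16 (n : ℕ) (hn : 2 ≤ n) (hne : Even n) (y ytilde : ℕ → ℂ) (q : ℂ)
    (hy : inGtilde (n + 1) y q)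
    (hmid : ytilde (n / 2) =
      (((n / 2 + 1 : ℕ) : ℂ) / ((2 * (n + 1) : ℕ) : ℂ)) * (y (n / 2) + y (n / 2 + 1)))
    (h1 : ∀ j, 1 ≤ j → j ≤ n / 2 - 1 →
      ytilde j = (((n + 1 - j : ℕ) : ℂ) / ((n + 1 : ℕ) : ℂ)) * y j ∧
      ytilde (n - j) = (((n + 1 - j : ℕ) : ℂ) / ((n + 1 : ℕ) : ℂ)) * y (n + 1 - j)) :
    inGtilde n ytilde q := by
  classical
  obtain ⟨hq, β, hβ⟩ := hy
  have hnev : n / 2 * 2 = n := Nat.div_two_mul_two_of_even hne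
  have hm2 : 1 ≤ n / 2 := by omega
  refine ⟨hq, ⟨fun j =>
    if j = n / 2 then (((n / 2 + 1 : ℕ) : ℂ) / ((2 * (n + 1) : ℕ) : ℂ)) * (β (n / 2) + β (n / 2 + 1))
    else if j < n / 2 then (((n + 1 - j : ℕ) : ℂ) / ((n + 1 : ℕ) : ℂ)) * β j
    else (((j + 1 : ℕ) : ℂ) / ((n + 1 : ℕ) : ℂ)) * β (j + 1), ?_⟩⟩
  intro j hj1 hjn
  have hn1pos : (0 : ℝ) < ((n + 1 : ℕ) : ℝ) := by positivity
  rcases lt_trichotomy j (n / 2) with hlt | heq | hgt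
  · -- j < n/2
    have hne1 : j ≠ n / 2 := Nat.ne_of_lt hlt
    have hnjne : n - j ≠ n / 2 := by omega
    have hnjnlt : ¬ (n - j < n / 2) := by omega
    have hnj : n + 1 - j = n - j + 1 := by omega
    obtain ⟨hyj, hyb⟩ := hβ j hj1 (by omega)
    obtain ⟨hzj, _⟩ := h1 j hj1 (by omega)
    simp only [if_neg hne1, if_pos hlt, if_neg hnjne, if_neg hnjnlt]
    constructor
    · rw [hzj, hyj, hnj]
      rw [map_mul, map_div₀]
      simp only [Complex.conj_natCast]
      ring
    · simp only [norm_mul, norm_div, Complex.norm_natCast]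
      have key : ((n + 1 - j : ℕ) : ℝ) / ((n + 1 : ℕ) : ℝ) * ((n + 1).choose j : ℝ)
          = (n.choose j : ℝ) := by
        have hcast := congrArg (Nat.cast (R := ℝ)) (Nat.choose_mul_succ_eq n j)
        push_cast [Nat.cast_sub (by omega : j ≤ n + 1)] at hcast
        rw [div_mul_eq_mul_div, div_eq_iff (by positivity)]
        push_cast [Nat.cast_sub (by omega : j ≤ n + 1)]
        linarith
      calc ((n + 1 - j : ℕ) : ℝ) / ((n + 1 : ℕ) : ℝ) * ‖β j‖
            + ((n - j + 1 : ℕ) : ℝ) / ((n + 1 : ℕ) : ℝ) * ‖β (n - j + 1)‖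
          = ((n + 1 - j : ℕ) : ℝ) / ((n + 1 : ℕ) : ℝ)
              * (‖β j‖ + ‖β (n + 1 - j)‖) := by
            rw [hnj]; ring
        _ < ((n + 1 - j : ℕ) : ℝ) / ((n + 1 : ℕ) : ℝ) * ((n + 1).choose j : ℝ) := by
            apply mul_lt_mul_of_pos_left hyb
            have h0 : 0 < n + 1 - j := by omega
            have h0' : (0 : ℝ) < ((n + 1 - j : ℕ) : ℝ) := by exact_mod_cast h0
            positivity
        _ = (n.choose j : ℝ) := key
  · -- j = n/2
    have hsub1 : n + 1 - j = j + 1 := by omega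
    have hsub2 : n + 1 - (j + 1) = j := by omega
    have hnj : n - j = j := by omega
    obtain ⟨hyj, hyb⟩ := hβ j hj1 (by omega)
    obtain ⟨hyj', _⟩ := hβ (j + 1) (by omega) (by omega)
    rw [hsub1] at hyj hyb
    rw [hsub2] at hyj'
    rw [← heq] at hmid
    simp only [hnj, if_pos heq]
    rw [← heq]
    constructor
    · rw [hmid, hyj, hyj']
      rw [map_mul, map_div₀, map_add]
      simp only [Complex.conj_natCast]
      ring
    · have habs : ‖(((j + 1 : ℕ) : ℂ) / ((2 * (n + 1) : ℕ) : ℂ))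
          * (β j + β (j + 1))‖
          ≤ ((j + 1 : ℕ) : ℝ) / ((2 * (n + 1) : ℕ) : ℝ)
            * (‖β j‖ + ‖β (j + 1)‖) := by
        rw [norm_mul, norm_div, Complex.norm_natCast, Complex.norm_natCast]
        apply mul_le_mul_of_nonneg_left (norm_add_le _ _)
        positivity
      have hkey : ((j + 1 : ℕ) : ℝ) / ((n + 1 : ℕ) : ℝ) * ((n + 1).choose j : ℝ)
          = (n.choose j : ℝ) := by
        have h := Nat.choose_mul_succ_eq n j
        rw [show n + 1 - j = j + 1 from hsub1] at h
        have hcast := congrArg (Nat.cast (R := ℝ)) h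
        push_cast at hcast
        rw [div_mul_eq_mul_div, div_eq_iff (by positivity)]
        push_cast
        linarith
      have h2 : ((2 * (n + 1) : ℕ) : ℝ) = 2 * ((n + 1 : ℕ) : ℝ) := by push_cast; ring
      have hc2pos : (0 : ℝ) < ((2 * (n + 1) : ℕ) : ℝ) := by positivity
      have hjpos : (0 : ℝ) < ((j + 1 : ℕ) : ℝ) := by positivity
      calc ‖(((j + 1 : ℕ) : ℂ) / ((2 * (n + 1) : ℕ) : ℂ)) * (β j + β (j + 1))‖
            + ‖(((j + 1 : ℕ) : ℂ) / ((2 * (n + 1) : ℕ) : ℂ)) * (β j + β (j + 1))‖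
          ≤ 2 * (((j + 1 : ℕ) : ℝ) / ((2 * (n + 1) : ℕ) : ℝ)
            * (‖β j‖ + ‖β (j + 1)‖)) := by linarith
        _ < 2 * (((j + 1 : ℕ) : ℝ) / ((2 * (n + 1) : ℕ) : ℝ) * ((n + 1).choose j : ℝ)) := by
            apply mul_lt_mul_of_pos_left _ (by norm_num)
            exact mul_lt_mul_of_pos_left hyb (by positivity)
        _ = (n.choose j : ℝ) := by
            rw [h2, ← hkey]; field_simp
  · -- j > n/2
    set j' := n - j with hj'
    have hj'1 : 1 ≤ j' := by omega
    have hj'lt : j' < n / 2 := by omega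
    have hne1 : j ≠ n / 2 := by omega
    have hnlt : ¬ (j < n / 2) := by omega
    have hnjne : j' ≠ n / 2 := by omega
    have hjj : n - j' = j := by omega
    have hnj1 : n + 1 - j' = j + 1 := by omega
    have hnj2 : n + 1 - (j + 1) = j' := by omega
    obtain ⟨hyj, hyb⟩ := hβ j' hj'1 (by omega)
    obtain ⟨hyj2, _⟩ := hβ (j + 1) (by omega) (by omega)
    obtain ⟨_, hzj⟩ := h1 j' hj'1 (by omega)
    rw [hjj] at hzj
    rw [hnj1] at hzj hyb
    rw [hnj2] at hyj2
    simp only [if_neg hne1, if_neg hnlt, if_neg hnjne, if_pos hj'lt, ← hj']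
    constructor
    · rw [hzj, hyj2]
      rw [map_mul, map_div₀]
      simp only [Complex.conj_natCast]
      rw [hnj1]
      ring
    · simp only [norm_mul, norm_div, Complex.norm_natCast]
      have hchoose : n.choose j = n.choose j' := by
        rw [← Nat.choose_symm (by omega : j ≤ n), hj']
      have key : ((j + 1 : ℕ) : ℝ) / ((n + 1 : ℕ) : ℝ) * ((n + 1).choose j' : ℝ)
          = (n.choose j' : ℝ) := by
        have h := Nat.choose_mul_succ_eq n j'
        rw [show n + 1 - j' = j + 1 from hnj1] at h
        have hcast := congrArg (Nat.cast (R := ℝ)) h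
        push_cast at hcast
        rw [div_mul_eq_mul_div, div_eq_iff (by positivity)]
        push_cast
        linarith
      rw [hchoose]
      have hnn : ((n + 1 - j' : ℕ) : ℝ) = ((j + 1 : ℕ) : ℝ) := by rw [hnj1]
      calc ((j + 1 : ℕ) : ℝ) / ((n + 1 : ℕ) : ℝ) * ‖β (j + 1)‖
            + ((n + 1 - j' : ℕ) : ℝ) / ((n + 1 : ℕ) : ℝ) * ‖β j'‖
          = ((j + 1 : ℕ) : ℝ) / ((n + 1 : ℕ) : ℝ)
              * (‖β j'‖ + ‖β (j + 1)‖) := by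
            rw [hnn]; ring
        _ < ((j + 1 : ℕ) : ℝ) / ((n + 1 : ℕ) : ℝ) * ((n + 1).choose j' : ℝ) := by
            apply mul_lt_mul_of_pos_left hyb
            positivity
        _ = (n.choose j' : ℝ) := key
end

section
/- Let n ≥ 2, x = (x_1,…,x_n) ∈ ℂ^n, and suppose ψ : 𝔻 → G̃_n ⊂ ℂ^n is analytic with ψ(0) = 0 and ψ'(0) = x, and assume moreover that for each λ ∈ 𝔻 \ {0} and each 1 ≤ j ≤ n−1, with C = C(n,j): C·|ψ_j(λ) − conj(ψ_{n−j}(λ))·ψ_n(λ)| + |ψ_j(λ)·ψ_{n−j}(λ) − C²·ψ_n(λ)| ≤ |λ|·(C² − |ψ_{n−j}(λ)|²). Then max over 1 ≤ j ≤ n−1 of |x_j|/C(n,j), plus |x_n|, is at most 1. -/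
open Complex Metric

theorem stmt19 (n : ℕ) (hn : 2 ≤ n) (ψ : ℕ → ℂ → ℂ) (x : ℕ → ℂ)
    (hdiff : ∀ i, 1 ≤ i → i ≤ n → DifferentiableOn ℂ (ψ i) (ball (0 : ℂ) 1))
    (hmap : ∀ z ∈ ball (0 : ℂ) 1, inGtilde n (fun j => ψ j z) (ψ n z))
    (hψ0 : ∀ i, 1 ≤ i → i ≤ n → ψ i 0 = 0)
    (hderiv : ∀ i, 1 ≤ i → i ≤ n → deriv (ψ i) 0 = x i)
    (hbound : ∀ z ∈ ball (0 : ℂ) 1, z ≠ 0 → ∀ j, 1 ≤ j → j ≤ n - 1 →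
      (n.choose j : ℝ) *
          ‖ψ j z - (starRingEnd ℂ) (ψ (n - j) z) * ψ n z‖ +
        ‖ψ j z * ψ (n - j) z - (n.choose j : ℂ) ^ 2 * ψ n z‖ ≤
      ‖z‖ * ((n.choose j : ℝ) ^ 2 - (‖ψ (n - j) z‖) ^ 2)) :
    ∀ j, 1 ≤ j → j ≤ n - 1 →
      ‖x j‖ / (n.choose j : ℝ) + ‖x n‖ ≤ 1 := by
  intro j hj1 hj2
  have h0mem : (0 : ℂ) ∈ ball (0 : ℂ) 1 := mem_ball_self one_pos
  have hball : ball (0 : ℂ) 1 ∈ nhds (0 : ℂ) := isOpen_ball.mem_nhds h0mem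
  have hjn : j ≤ n := hj2.trans (Nat.sub_le n 1)
  have hnj1 : 1 ≤ n - j := by omega
  have hnjn : n - j ≤ n := Nat.sub_le n n |>.trans (le_refl n) |> fun _ => Nat.sub_le n j
  set C : ℝ := (n.choose j : ℝ) with hC
  have hCpos : 0 < C := by
    have h : (0:ℝ) < (n.choose j : ℝ) := by exact_mod_cast Nat.choose_pos hjn
    rwa [hC]
  -- derivative limits
  have hslope : ∀ i, 1 ≤ i → i ≤ n →
      Filter.Tendsto (fun z : ℂ => ψ i z / z) (nhdsWithin 0 {(0:ℂ)}ᶜ) (nhds (x i)) := by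
    intro i hi1 hi2
    have hda : DifferentiableAt ℂ (ψ i) 0 :=
      (hdiff i hi1 hi2).differentiableAt hball
    have hd : HasDerivAt (ψ i) (x i) 0 := by
      have := hda.hasDerivAt
      rwa [hderiv i hi1 hi2] at this
    have := hasDerivAt_iff_tendsto_slope.mp hd
    refine this.congr (fun z => ?_)
    simp [slope_def_field, hψ0 i hi1 hi2, div_eq_inv_mul]
  have hψj := hslope j hj1 hjn
  have hψnj := hslope (n - j) hnj1 (Nat.sub_le n j)
  have hψn := hslope n (by omega) le_rfl
  -- continuity limit for ψ (n-j)
  have hcont : Filter.Tendsto (fun z : ℂ => ψ (n - j) z) (nhdsWithin 0 {(0:ℂ)}ᶜ) (nhds 0) := by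
    have hda : DifferentiableAt ℂ (ψ (n - j)) 0 :=
      (hdiff (n - j) hnj1 (Nat.sub_le n j)).differentiableAt hball
    have := hda.continuousAt.tendsto
    rw [hψ0 (n - j) hnj1 (Nat.sub_le n j)] at this
    exact this.mono_left nhdsWithin_le_nhds
  have hconj : Filter.Tendsto (fun z : ℂ => (starRingEnd ℂ) (ψ (n - j) z))
      (nhdsWithin 0 {(0:ℂ)}ᶜ) (nhds 0) := by
    have : Filter.Tendsto (starRingEnd ℂ) (nhds (0:ℂ)) (nhds ((starRingEnd ℂ) 0)) :=
      (continuous_conj).tendsto 0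
    simpa [Function.comp_def] using this.comp hcont
  -- F and G
  set F : ℂ → ℝ := fun z =>
    C * ‖ψ j z / z - (starRingEnd ℂ) (ψ (n - j) z) * (ψ n z / z)‖ +
      ‖(ψ j z / z) * ψ (n - j) z - (n.choose j : ℂ) ^ 2 * (ψ n z / z)‖ with hF
  set G : ℂ → ℝ := fun z => C ^ 2 - (‖ψ (n - j) z‖) ^ 2 with hG
  have htF : Filter.Tendsto F (nhdsWithin 0 {(0:ℂ)}ᶜ)
      (nhds (C * ‖x j‖ + C ^ 2 * ‖x n‖)) := by
    have h1 : Filter.Tendsto (fun z : ℂ => ψ j z / z - (starRingEnd ℂ) (ψ (n - j) z) * (ψ n z / z))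
        (nhdsWithin 0 {(0:ℂ)}ᶜ) (nhds (x j)) := by
      have := hψj.sub (hconj.mul hψn)
      simpa using this
    have h2 : Filter.Tendsto (fun z : ℂ => (ψ j z / z) * ψ (n - j) z - (n.choose j : ℂ) ^ 2 * (ψ n z / z))
        (nhdsWithin 0 {(0:ℂ)}ᶜ) (nhds (-((n.choose j : ℂ) ^ 2 * x n))) := by
      have := (hψj.mul hcont).sub (Filter.Tendsto.const_mul ((n.choose j : ℂ) ^ 2) hψn)
      simpa using this
    have ha1 := (continuous_norm.tendsto _).comp h1
    have ha2 := (continuous_norm.tendsto _).comp h2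
    have hsum := (ha1.const_mul C).add ha2
    have habs : ‖-((n.choose j : ℂ) ^ 2 * x n)‖ = C ^ 2 * ‖x n‖ := by
      simp [norm_mul, norm_pow, Complex.norm_natCast, hC]
    rw [habs] at hsum
    simpa [hF, Function.comp] using hsum
  have htG : Filter.Tendsto G (nhdsWithin 0 {(0:ℂ)}ᶜ) (nhds (C ^ 2)) := by
    have ha := (continuous_norm.tendsto _).comp hcont
    have : Filter.Tendsto (fun z : ℂ => (‖ψ (n - j) z‖) ^ 2)
        (nhdsWithin 0 {(0:ℂ)}ᶜ) (nhds 0) := by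
      have := ha.pow 2
      simpa [Function.comp] using this
    have := Filter.Tendsto.sub (tendsto_const_nhds (x := C ^ 2)) this
    simpa using this
  have hle : ∀ᶠ z in nhdsWithin (0:ℂ) {(0:ℂ)}ᶜ, F z ≤ G z := by
    filter_upwards [nhdsWithin_le_nhds hball, self_mem_nhdsWithin] with z hz hz0
    have hz0' : z ≠ 0 := hz0
    have hb := hbound z hz hz0' j hj1 hj2
    have hzpos : 0 < ‖z‖ := by simpa using norm_pos_iff.mpr hz0'
    have e1 : ψ j z / z - (starRingEnd ℂ) (ψ (n - j) z) * (ψ n z / z) =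
        (ψ j z - (starRingEnd ℂ) (ψ (n - j) z) * ψ n z) / z := by field_simp
    have e2 : (ψ j z / z) * ψ (n - j) z - (n.choose j : ℂ) ^ 2 * (ψ n z / z) =
        (ψ j z * ψ (n - j) z - (n.choose j : ℂ) ^ 2 * ψ n z) / z := by field_simp
    show F z ≤ G z
    rw [hF, hG]
    simp only [e1, e2, norm_div]
    have hrw : C * (‖ψ j z - (starRingEnd ℂ) (ψ (n - j) z) * ψ n z‖ / ‖z‖) +
        ‖ψ j z * ψ (n - j) z - (n.choose j : ℂ) ^ 2 * ψ n z‖ / ‖z‖ =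
        (C * ‖ψ j z - (starRingEnd ℂ) (ψ (n - j) z) * ψ n z‖ +
        ‖ψ j z * ψ (n - j) z - (n.choose j : ℂ) ^ 2 * ψ n z‖) / ‖z‖ := by
      ring
    rw [hrw, div_le_iff₀ hzpos]
    exact hb.trans_eq (mul_comm _ _)
  have key : C * ‖x j‖ + C ^ 2 * ‖x n‖ ≤ C ^ 2 :=
    le_of_tendsto_of_tendsto htF htG hle
  have hCne : C ≠ 0 := ne_of_gt hCpos
  rw [div_add' _ _ _ hCne, div_le_one hCpos]
  nlinarith [norm_nonneg (x j), norm_nonneg (x n)]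
end
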